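/- arXiv:2511.05793 — 7 statements merged into one kernel-verified Lean document; each statement's English description precedes it below -/
import Mathlib

section
/- (MFCQ implies Abadie CQ.) Let Y = {y ∈ ℝ^q : h_i(y) = 0 for all i ∈ I, g_j(y) ≤ 0 for all j ∈ J} with h_i, g_j of class C¹ and I, J finite, and let y ∈ Y. If {∇h_i(y) : i ∈ I} is linearly independent and there exists ν ∈ ℝ^q with ⟨∇h_i(y), ν⟩ = 0 for all i ∈ I and ⟨∇g_j(y), ν⟩ < 0 for all j ∈ 𝒜(y), then T_Y(y) = L_Y(y). -/
open Filter Topology RealInnerProductSpace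

noncomputable section

/-- The Bouligand tangent cone: directions `ν` such that there are sequences `νₖ → ν` and
`tₖ → 0⁺` with `y + tₖ • νₖ ∈ Y` for every `k`. -/
def bouligandTangentCone {E : Type*} [NormedAddCommGroup E] [InnerProductSpace ℝ E]
    (Y : Set E) (y : E) : Set E :=
  {ν | ∃ (νs : ℕ → E) (t : ℕ → ℝ),
    Tendsto νs atTop (𝓝 ν) ∧ (∀ k, 0 < t k) ∧ Tendsto t atTop (𝓝 0) ∧
    ∀ k, y + t k • νs k ∈ Y}

/-- The normal cone, the polar of the Bouligand tangent cone. -/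
def normalCone {E : Type*} [NormedAddCommGroup E] [InnerProductSpace ℝ E]
    (Y : Set E) (y : E) : Set E :=
  {η | ∀ ν ∈ bouligandTangentCone Y y, ⟪η, ν⟫ ≤ 0}

/-- The feasible set described by equality constraints `hI i = 0` and
inequality constraints `gJ j ≤ 0`. -/
def feasSet {E : Type*} [NormedAddCommGroup E] [InnerProductSpace ℝ E] {I J : Type*}
    (hI : I → E → ℝ) (gJ : J → E → ℝ) : Set E :=
  {y | (∀ i, hI i y = 0) ∧ ∀ j, gJ j y ≤ 0}

/-- The linearized tangent cone at `y`: `⟨∇hᵢ(y), ν⟩ = 0` for all `i ∈ I` and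
`⟨∇gⱼ(y), ν⟩ ≤ 0` for all active `j` (i.e. `gⱼ(y) = 0`). -/
def linearizedCone {E : Type*} [NormedAddCommGroup E] [InnerProductSpace ℝ E] [CompleteSpace E]
    {I J : Type*} (hI : I → E → ℝ) (gJ : J → E → ℝ) (y : E) : Set E :=
  {ν | (∀ i, ⟪gradient (hI i) y, ν⟫ = 0) ∧ ∀ j, gJ j y = 0 → ⟪gradient (gJ j) y, ν⟫ ≤ 0}

/-! ### Auxiliary lemmas -/

lemma inner_gradient_eq {E : Type*} [NormedAddCommGroup E] [InnerProductSpace ℝ E]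
    [CompleteSpace E] (f : E → ℝ) (y v : E) :
    ⟪gradient f y, v⟫ = fderiv ℝ f y v :=
  InnerProductSpace.toDual_symm_apply

lemma slope_key {E : Type*} [NormedAddCommGroup E] [NormedSpace ℝ E]
    {f : E → ℝ} {f' : E →L[ℝ] ℝ} {y ν : E} (hf : HasFDerivAt f f' y)
    {νs : ℕ → E} {t : ℕ → ℝ} (hνs : Tendsto νs atTop (𝓝 ν))
    (ht : ∀ k, t k ≠ 0) (ht0 : Tendsto t atTop (𝓝 0)) :
    Tendsto (fun k => (f (y + t k • νs k) - f y) / t k) atTop (𝓝 (f' ν)) := by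
  have hu0 : Tendsto (fun k => t k • νs k) atTop (𝓝 0) := by
    simpa using ht0.smul hνs
  have hyu : Tendsto (fun k => y + t k • νs k) atTop (𝓝 y) := by
    simpa using tendsto_const_nhds.add hu0
  have h1 : (fun k => f (y + t k • νs k) - f y - f' (t k • νs k))
      =o[atTop] (fun k => t k • νs k) := by
    have h := hf.isLittleO.comp_tendsto hyu
    simp only [Function.comp_def, add_sub_cancel_left] at h
    exact h
  have h2 : (fun k => t k • νs k) =O[atTop] t := by
    obtain ⟨C, hC⟩ := hνs.norm.bddAbove_range
    rw [mem_upperBounds] at hC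
    refine Asymptotics.isBigO_iff.mpr ⟨C, Filter.Eventually.of_forall fun k => ?_⟩
    rw [norm_smul, Real.norm_eq_abs, mul_comm]
    exact mul_le_mul_of_nonneg_right (hC _ ⟨k, rfl⟩) (abs_nonneg _)
  have h3 := h1.trans_isBigO h2
  have h4 : Tendsto (fun k => (f (y + t k • νs k) - f y - f' (t k • νs k)) / t k)
      atTop (𝓝 0) :=
    (Asymptotics.isLittleO_iff_tendsto fun k hk => absurd hk (ht k)).mp h3
  have h5 : Tendsto (fun k => f' (νs k)) atTop (𝓝 (f' ν)) := (f'.continuous.tendsto ν).comp hνs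
  have h6 := h4.add h5
  rw [zero_add] at h6
  refine h6.congr fun k => ?_
  have hfu : f' (t k • νs k) = t k * f' (νs k) := by simp
  rw [hfu, sub_div, mul_div_cancel_left₀ _ (ht k), sub_add_cancel]

lemma bouligand_isClosed {E : Type*} [NormedAddCommGroup E] [InnerProductSpace ℝ E]
    (Y : Set E) (y : E) : IsClosed (bouligandTangentCone Y y) := by
  refine IsSeqClosed.isClosed ?_
  intro u p hu hup
  simp only [bouligandTangentCone, Set.mem_setOf_eq] at hu ⊢
  choose νs ts h1 h2 h3 h4 using hu
  have hsel : ∀ m : ℕ, ∃ k, ‖νs m k - u m‖ < 1/((m:ℝ)+1) ∧ ts m k < 1/((m:ℝ)+1) := by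
    intro m
    have e0 : Tendsto (fun k => ‖νs m k - u m‖) atTop (𝓝 0) := by
      simpa using ((h1 m).sub (tendsto_const_nhds (x := u m))).norm
    have e1 : ∀ᶠ k in atTop, ‖νs m k - u m‖ < 1/((m:ℝ)+1) :=
      e0.eventually_lt_const (by positivity)
    have e2 : ∀ᶠ k in atTop, ts m k < 1/((m:ℝ)+1) :=
      (h3 m).eventually_lt_const (by positivity)
    exact (e1.and e2).exists
  choose k hk1 hk2 using hsel
  refine ⟨fun m => νs m (k m), fun m => ts m (k m), ?_, fun m => h2 m (k m), ?_,
    fun m => h4 m (k m)⟩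
  · rw [tendsto_iff_norm_sub_tendsto_zero]
    have hb : Tendsto (fun m : ℕ => 1/((m:ℝ)+1) + ‖u m - p‖) atTop (𝓝 0) := by
      simpa using tendsto_one_div_add_atTop_nhds_zero_nat.add
        (tendsto_iff_norm_sub_tendsto_zero.mp hup)
    refine squeeze_zero (fun m => norm_nonneg _) (fun m => ?_) hb
    calc ‖νs m (k m) - p‖ = ‖(νs m (k m) - u m) + (u m - p)‖ := by abel_nf
      _ ≤ ‖νs m (k m) - u m‖ + ‖u m - p‖ := norm_add_le _ _
      _ ≤ 1/((m:ℝ)+1) + ‖u m - p‖ := add_le_add (hk1 m).le le_rfl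
  · exact squeeze_zero (fun m => (h2 m (k m)).le) (fun m => (hk2 m).le)
      tendsto_one_div_add_atTop_nhds_zero_nat

/-- A tangent curve through `y` in direction `w ∈ ker f'`, staying on the level set of `f`,
obtained from the implicit function theorem. -/
lemma exists_tangent_curve {E Φ : Type*} [NormedAddCommGroup E] [NormedSpace ℝ E]
    [CompleteSpace E] [NormedAddCommGroup Φ] [NormedSpace ℝ Φ] [FiniteDimensional ℝ Φ]
    {f : E → Φ} {f' : E →L[ℝ] Φ} {y : E} (hf : HasStrictFDerivAt f f' y)
    (hrange : f'.range = ⊤) (w : E) (hw : w ∈ f'.ker) :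
    ∃ c : ℝ → E, c 0 = y ∧ HasDerivAt c w 0 ∧ ∀ᶠ t in 𝓝 (0:ℝ), f (c t) = f y := by
  refine ⟨fun t => hf.implicitFunction f f' hrange (f y) (t • (⟨w, hw⟩ : f'.ker)),
    ?_, ?_, ?_⟩
  · simp only [zero_smul]
    exact hf.implicitFunction_apply_image hrange
  · have hψ : HasStrictFDerivAt (hf.implicitFunction f f' hrange (f y))
        (Submodule.subtypeL (f'.ker)) 0 := hf.to_implicitFunction hrange
    have hψ0 : HasFDerivAt (hf.implicitFunction f f' hrange (f y))
        (Submodule.subtypeL (f'.ker))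
        ((0:ℝ) • (⟨w, hw⟩ : f'.ker)) := by
      rw [zero_smul]; exact hψ.hasFDerivAt
    have hlin : HasDerivAt (fun t : ℝ => t • (⟨w, hw⟩ : f'.ker))
        (⟨w, hw⟩ : f'.ker) 0 := by
      simpa using (hasDerivAt_id (0:ℝ)).smul_const (⟨w, hw⟩ : f'.ker)
    have := hψ0.comp_hasDerivAt 0 hlin
    exact this
  · have hmap := hf.map_implicitFunction_eq hrange
    have htend : Tendsto (fun t : ℝ => (f y, t • (⟨w, hw⟩ : f'.ker)))
        (𝓝 0) (𝓝 (f y, (0 : f'.ker))) := by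
      refine Filter.Tendsto.prodMk_nhds tendsto_const_nhds ?_
      have : Tendsto (fun t : ℝ => t • (⟨w, hw⟩ : f'.ker)) (𝓝 0)
          (𝓝 ((0:ℝ) • (⟨w, hw⟩ : f'.ker))) :=
        Filter.Tendsto.smul_const tendsto_id _
      simpa using this
    exact htend.eventually hmap

/-- If a continuous linear map into `I → ℝ` is given by inner products against a linearly
independent family, it is surjective. -/
lemma range_eq_top_of_inner {E : Type*} [NormedAddCommGroup E] [InnerProductSpace ℝ E]
    {I : Type*} [Fintype I] (G : I → E) (hLI : LinearIndependent ℝ G)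
    (T : E →L[ℝ] (I → ℝ)) (hT : ∀ v i, T v i = ⟪G i, v⟫) :
    T.range = ⊤ := by
  classical
  rw [LinearMap.range_eq_top]
  set S : (I → ℝ) →ₗ[ℝ] E :=
    { toFun := fun c => ∑ i, c i • G i
      map_add' := by intro a b; simp [add_smul, Finset.sum_add_distrib]
      map_smul' := by intro m a; simp [smul_smul, Finset.smul_sum] } with hS
  have hSapp : ∀ c : I → ℝ, S c = ∑ i, c i • G i := fun c => rfl
  set TS : (I → ℝ) →ₗ[ℝ] (I → ℝ) := ((T : E →ₗ[ℝ] (I → ℝ)).comp S) with hTS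
  have hTSapp : ∀ c : I → ℝ, TS c = T (S c) := fun c => rfl
  have hTSinj : Function.Injective TS := by
    rw [← LinearMap.ker_eq_bot, LinearMap.ker_eq_bot']
    intro c hc
    have hS0 : S c = 0 := by
      have h0 : ⟪S c, S c⟫ = 0 := by
        rw [show (⟪S c, S c⟫ : ℝ) = ∑ i, c i * ⟪G i, S c⟫ by
          rw [hSapp, sum_inner]; simp [real_inner_smul_left]]
        refine Finset.sum_eq_zero fun i _ => ?_
        have hi : ⟪G i, S c⟫ = 0 := by
          rw [← hT (S c) i, ← hTSapp, hc]
          rfl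
        rw [hi, mul_zero]
      exact inner_self_eq_zero.mp h0
    have := Fintype.linearIndependent_iff.mp hLI c (by rw [← hSapp]; exact hS0)
    funext i; exact this i
  have hTSsurj : Function.Surjective TS :=
    (LinearMap.injective_iff_surjective).mp hTSinj
  intro b
  obtain ⟨c, hc⟩ := hTSsurj b
  exact ⟨S c, hc⟩

/-- If `w` is orthogonal to all equality-constraint gradients and makes strictly negative
inner product with all active inequality-constraint gradients, then `w` is in the
Bouligand tangent cone. -/
lemma strict_dir_mem {q : ℕ} {I J : Type*} [Fintype I] [Fintype J]
    (hI : I → EuclideanSpace ℝ (Fin q) → ℝ) (gJ : J → EuclideanSpace ℝ (Fin q) → ℝ)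
    (hreg : ∀ i, ContDiff ℝ 1 (hI i)) (greg : ∀ j, ContDiff ℝ 1 (gJ j))
    (y : EuclideanSpace ℝ (Fin q)) (hy : y ∈ feasSet hI gJ)
    (hLI : LinearIndependent ℝ (fun i : I => gradient (hI i) y))
    (w : EuclideanSpace ℝ (Fin q))
    (hw1 : ∀ i, ⟪gradient (hI i) y, w⟫ = 0)
    (hw2 : ∀ j, gJ j y = 0 → ⟪gradient (gJ j) y, w⟫ < 0) :
    w ∈ bouligandTangentCone (feasSet hI gJ) y := by
  classical
  have hGrad : ∀ i (v : EuclideanSpace ℝ (Fin q)),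
      fderiv ℝ (hI i) y v = ⟪gradient (hI i) y, v⟫ := fun i v =>
    (inner_gradient_eq (hI i) y v).symm
  have hFs : HasStrictFDerivAt (fun x (i : I) => hI i x)
      (ContinuousLinearMap.pi fun i => fderiv ℝ (hI i) y) y := by
    refine hasStrictFDerivAt_pi'.mpr fun i => ?_
    rw [ContinuousLinearMap.proj_pi]
    exact ((hreg i).contDiffAt).hasStrictFDerivAt one_ne_zero
  have hrange : (ContinuousLinearMap.pi fun i => fderiv ℝ (hI i) y).range = ⊤ := by
    refine range_eq_top_of_inner (fun i => gradient (hI i) y) hLI _ fun v i => ?_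
    simp only [ContinuousLinearMap.pi_apply]
    exact hGrad i v
  have hker : w ∈ (ContinuousLinearMap.pi fun i => fderiv ℝ (hI i) y).ker := by
    rw [LinearMap.mem_ker]
    funext i
    show fderiv ℝ (hI i) y w = 0
    rw [hGrad]; exact hw1 i
  obtain ⟨c, hc0, hcd, hFc⟩ := exists_tangent_curve hFs hrange w hker
  have hiall : ∀ᶠ t in 𝓝[>] (0:ℝ), ∀ i, hI i (c t) = 0 := by
    refine (hFc.mono ?_).filter_mono nhdsWithin_le_nhds
    intro t ht i
    have h := congrFun ht i
    simpa [hy.1 i] using h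
  have hjall : ∀ j, ∀ᶠ t in 𝓝[>] (0:ℝ), gJ j (c t) ≤ 0 := by
    intro j
    by_cases hj : gJ j y = 0
    · have hD : HasFDerivAt (gJ j) (fderiv ℝ (gJ j) y) (c 0) := by
        rw [hc0]
        exact ((greg j).differentiable one_ne_zero).differentiableAt.hasFDerivAt
      have hd : HasDerivAt (fun t => gJ j (c t)) (⟪gradient (gJ j) y, w⟫) 0 := by
        have h := hD.comp_hasDerivAt 0 hcd
        rw [inner_gradient_eq]
        exact h
      have hslope := hasDerivAt_iff_tendsto_slope.mp hd
      have hs2 : Tendsto (slope (fun t => gJ j (c t)) 0) (𝓝[>] (0:ℝ))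
          (𝓝 ⟪gradient (gJ j) y, w⟫) :=
        hslope.mono_left (nhdsWithin_mono _ (fun x hx => ne_of_gt hx))
      have hev : ∀ᶠ t in 𝓝[>] (0:ℝ), slope (fun t => gJ j (c t)) 0 t < 0 :=
        hs2.eventually_lt_const (hw2 j hj)
      filter_upwards [hev, self_mem_nhdsWithin] with t hst htpos
      have hslope_eq : slope (fun t => gJ j (c t)) 0 t = gJ j (c t) / t := by
        rw [slope_def_field, hc0, hj, sub_zero, sub_zero]
      rw [hslope_eq] at hst
      have heq : gJ j (c t) = (gJ j (c t) / t) * t :=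
        (div_mul_cancel₀ _ (ne_of_gt htpos)).symm
      rw [heq]
      exact (mul_neg_of_neg_of_pos hst htpos).le
    · have hlt : gJ j y < 0 := lt_of_le_of_ne (hy.2 j) hj
      have hcont : Tendsto (fun t => gJ j (c t)) (𝓝 (0:ℝ)) (𝓝 (gJ j y)) := by
        have h1 : Tendsto c (𝓝 (0:ℝ)) (𝓝 y) := by
          have h := hcd.continuousAt.tendsto
          rwa [hc0] at h
        exact ((greg j).continuous.tendsto y).comp h1
      exact ((hcont.eventually_lt_const hlt).mono fun t ht => ht.le).filter_mono
        nhdsWithin_le_nhds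
  have hall : ∀ᶠ t in 𝓝[>] (0:ℝ), c t ∈ feasSet hI gJ := by
    filter_upwards [hiall, eventually_all.mpr hjall] with t h1 h2
    exact ⟨h1, h2⟩
  obtain ⟨ε, hε, hsub⟩ := mem_nhdsGT_iff_exists_Ioc_subset.mp hall
  rw [Set.mem_Ioi] at hε
  have htpos : ∀ k : ℕ, 0 < ε / ((k:ℝ) + 1) := fun k => div_pos hε (by positivity)
  have htle : ∀ k : ℕ, ε / ((k:ℝ) + 1) ≤ ε := fun k =>
    div_le_self hε.le (by simp [le_add_iff_nonneg_left])
  have ht0 : Tendsto (fun k : ℕ => ε / ((k:ℝ) + 1)) atTop (𝓝 0) := by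
    have h := tendsto_one_div_add_atTop_nhds_zero_nat.const_mul ε
    simpa [mul_one_div, div_eq_mul_inv] using h
  refine ⟨fun k => (ε / ((k:ℝ) + 1))⁻¹ • (c (ε / ((k:ℝ) + 1)) - y),
    fun k => ε / ((k:ℝ) + 1), ?_, htpos, ht0, ?_⟩
  · have hslope := hasDerivAt_iff_tendsto_slope.mp hcd
    have htt : Tendsto (fun k : ℕ => ε / ((k:ℝ) + 1)) atTop (𝓝[≠] (0:ℝ)) := by
      rw [tendsto_nhdsWithin_iff]
      exact ⟨ht0, Filter.Eventually.of_forall fun k => (htpos k).ne'⟩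
    have h := hslope.comp htt
    refine h.congr fun k => ?_
    simp only [Function.comp_apply, slope_def_module, hc0, sub_zero]
  · intro k
    have heq : y + (ε / ((k:ℝ) + 1)) • ((ε / ((k:ℝ) + 1))⁻¹ • (c (ε / ((k:ℝ) + 1)) - y))
        = c (ε / ((k:ℝ) + 1)) := by
      rw [smul_inv_smul₀ (htpos k).ne']
      abel
    rw [heq]
    exact hsub ⟨htpos k, htle k⟩

/-- MFCQ implies Abadie CQ: if the gradients of the equality constraints are linearly
independent at `y ∈ Y` and there is a direction `ν` orthogonal to all `∇hᵢ(y)` with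
`⟨∇gⱼ(y), ν⟩ < 0` for every active `j`, then the Bouligand tangent cone equals the
linearized cone at `y`. -/
theorem mfcq_implies_abadie {q : ℕ} {I J : Type*} [Fintype I] [Fintype J]
    (hI : I → EuclideanSpace ℝ (Fin q) → ℝ) (gJ : J → EuclideanSpace ℝ (Fin q) → ℝ)
    (hreg : ∀ i, ContDiff ℝ 1 (hI i)) (greg : ∀ j, ContDiff ℝ 1 (gJ j))
    (y : EuclideanSpace ℝ (Fin q)) (hy : y ∈ feasSet hI gJ)
    (hLI : LinearIndependent ℝ (fun i : I => gradient (hI i) y))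
    (hdir : ∃ ν : EuclideanSpace ℝ (Fin q),
      (∀ i, ⟪gradient (hI i) y, ν⟫ = 0) ∧ ∀ j, gJ j y = 0 → ⟪gradient (gJ j) y, ν⟫ < 0) :
    bouligandTangentCone (feasSet hI gJ) y = linearizedCone hI gJ y := by
  apply Set.Subset.antisymm
  · -- T ⊆ L : always true
    rintro ν ⟨νs, t, h1, h2, h3, h4⟩
    constructor
    · intro i
      have hd := ((hreg i).differentiable one_ne_zero).differentiableAt (x := y)
      have hkey := slope_key hd.hasFDerivAt h1 (fun k => (h2 k).ne') h3
      have hzero : ∀ k, (hI i (y + t k • νs k) - hI i y) / t k = 0 := fun k => by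
        rw [(h4 k).1 i, hy.1 i, sub_zero, zero_div]
      have hkey' : Tendsto (fun _ : ℕ => (0:ℝ)) atTop (𝓝 (fderiv ℝ (hI i) y ν)) :=
        hkey.congr hzero
      have h0 := tendsto_nhds_unique tendsto_const_nhds hkey'
      rw [inner_gradient_eq, ← h0]
    · intro j hj
      have hd := ((greg j).differentiable one_ne_zero).differentiableAt (x := y)
      have hkey := slope_key hd.hasFDerivAt h1 (fun k => (h2 k).ne') h3
      rw [inner_gradient_eq]
      refine le_of_tendsto hkey (Filter.Eventually.of_forall fun k => ?_)
      apply div_nonpos_of_nonpos_of_nonneg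
      · rw [hj, sub_zero]; exact (h4 k).2 j
      · exact (h2 k).le
  · -- L ⊆ T : uses MFCQ
    rintro ν ⟨hν1, hν2⟩
    obtain ⟨d, hd1, hd2⟩ := hdir
    have hmem : ∀ m : ℕ, ν + (1/((m:ℝ)+1)) • d ∈ bouligandTangentCone (feasSet hI gJ) y := by
      intro m
      apply strict_dir_mem hI gJ hreg greg y hy hLI
      · intro i
        rw [inner_add_right, real_inner_smul_right, hν1 i, hd1 i, mul_zero, add_zero]
      · intro j hj
        rw [inner_add_right, real_inner_smul_right]
        have h1 := hν2 j hj
        have h2 := hd2 j hj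
        have h3 : (1/((m:ℝ)+1)) * ⟪gradient (gJ j) y, d⟫ < 0 :=
          mul_neg_of_pos_of_neg (by positivity) h2
        linarith
    have htend : Tendsto (fun m : ℕ => ν + (1/((m:ℝ)+1)) • d) atTop (𝓝 ν) := by
      have h : Tendsto (fun m : ℕ => (1/((m:ℝ)+1)) • d) atTop (𝓝 ((0:ℝ) • d)) :=
        tendsto_one_div_add_atTop_nhds_zero_nat.smul_const d
      simpa using tendsto_const_nhds.add h
    exact (bouligand_isClosed (feasSet hI gJ) y).mem_of_tendsto htend
      (Filter.Eventually.of_forall hmem)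
end
end

section
/- (MPCC-to-bilevel direction.) Under the same setting: θ_f(x,·) convex and C¹, g_j(x,·) convex and C¹, h_i(x,·) affine, and K(x) satisfying the Abadie constraint qualification for every x ∈ X — if (x̄, ȳ, λ̄, μ̄) is an optimal solution of the MPCC (minimize θ_l(x,y) over (x,y,λ,μ) with x ∈ X, ∇_y θ_f(x,y) + Σ_i λ_i ∇_y h_i(x,y) + Σ_j μ_j ∇_y g_j(x,y) = 0, μ_j ≥ 0, μ_j g_j(x,y) = 0 for all j ∈ J, h_i(x,y) = 0 for all i ∈ I, g_j(x,y) ≤ 0 for all j ∈ J), then (x̄, ȳ) is an optimal solution of the bilevel problem: minimize θ_l(x,y) over x ∈ X and y ∈ S(x), where S(x) is the set of minimizers of θ_f(x,·) over K(x). -/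
open Filter Topology RealInnerProductSpace

noncomputable section

/-- The lower-level feasible set `K(x)` described by `hᵢ(x,y) = 0` and `gⱼ(x,y) ≤ 0`. -/
def lowerFeasSet {p q : ℕ} {I J : Type*}
    (hI : I → EuclideanSpace ℝ (Fin p) → EuclideanSpace ℝ (Fin q) → ℝ)
    (gJ : J → EuclideanSpace ℝ (Fin p) → EuclideanSpace ℝ (Fin q) → ℝ)
    (x : EuclideanSpace ℝ (Fin p)) : Set (EuclideanSpace ℝ (Fin q)) :=
  {y | (∀ i, hI i x y = 0) ∧ ∀ j, gJ j x y ≤ 0}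

/-- The linearized tangent cone of `K(x)` at `y`, taken with respect to the `y`-variable. -/
def linearizedConeLower {p q : ℕ} {I J : Type*}
    (hI : I → EuclideanSpace ℝ (Fin p) → EuclideanSpace ℝ (Fin q) → ℝ)
    (gJ : J → EuclideanSpace ℝ (Fin p) → EuclideanSpace ℝ (Fin q) → ℝ)
    (x : EuclideanSpace ℝ (Fin p)) (y : EuclideanSpace ℝ (Fin q)) :
    Set (EuclideanSpace ℝ (Fin q)) :=
  {ν | (∀ i, ⟪gradient (hI i x) y, ν⟫ = 0) ∧
    ∀ j, gJ j x y = 0 → ⟪gradient (gJ j x) y, ν⟫ ≤ 0}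

/-- The lower-level solution set `S(x)`: minimizers of `θ_f(x,·)` over `K(x)`. -/
def lowerSolSet {p q : ℕ} {I J : Type*}
    (θf : EuclideanSpace ℝ (Fin p) → EuclideanSpace ℝ (Fin q) → ℝ)
    (hI : I → EuclideanSpace ℝ (Fin p) → EuclideanSpace ℝ (Fin q) → ℝ)
    (gJ : J → EuclideanSpace ℝ (Fin p) → EuclideanSpace ℝ (Fin q) → ℝ)
    (x : EuclideanSpace ℝ (Fin p)) : Set (EuclideanSpace ℝ (Fin q)) :=
  {y ∈ lowerFeasSet hI gJ x | ∀ y' ∈ lowerFeasSet hI gJ x, θf x y ≤ θf x y'}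

/-- Feasibility for the MPCC reformulation: `x ∈ X`, stationarity of the lower-level
Lagrangian in `y`, nonnegativity of `μ`, complementary slackness, and lower-level
feasibility of `(x,y)`. -/
def MPCCFeasible {p q : ℕ} {I J : Type*} [Fintype I] [Fintype J]
    (X : Set (EuclideanSpace ℝ (Fin p)))
    (θf : EuclideanSpace ℝ (Fin p) → EuclideanSpace ℝ (Fin q) → ℝ)
    (hI : I → EuclideanSpace ℝ (Fin p) → EuclideanSpace ℝ (Fin q) → ℝ)
    (gJ : J → EuclideanSpace ℝ (Fin p) → EuclideanSpace ℝ (Fin q) → ℝ)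
    (x : EuclideanSpace ℝ (Fin p)) (y : EuclideanSpace ℝ (Fin q))
    (lam : I → ℝ) (mu : J → ℝ) : Prop :=
  x ∈ X ∧
  gradient (θf x) y + ∑ i, lam i • gradient (hI i x) y
    + ∑ j, mu j • gradient (gJ j x) y = 0 ∧
  (∀ j, 0 ≤ mu j) ∧ (∀ j, mu j * gJ j x y = 0) ∧
  (∀ i, hI i x y = 0) ∧ (∀ j, gJ j x y ≤ 0)

section AuxLemmas


variable {E : Type*} [NormedAddCommGroup E] [InnerProductSpace ℝ E]

/-- Gradient inequality for convex differentiable functions. -/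
lemma grad_ineq [CompleteSpace E] {f : E → ℝ} (hc : ConvexOn ℝ Set.univ f) {y z : E} {g : E}
    (hg : HasGradientAt f g y) : ⟪g, z - y⟫ ≤ f z - f y := by
  set φ : ℝ → ℝ := f ∘ (AffineMap.lineMap y z) with hφ
  have hφc : ConvexOn ℝ Set.univ φ := by
    have := hc.comp_affineMap (AffineMap.lineMap y z)
    simpa using this
  have hd : HasDerivAt φ ⟪g, z - y⟫ 0 := by
    have hc' : HasDerivAt (fun t : ℝ => (AffineMap.lineMap y z) t) (z - y) 0 := by
      simp only [AffineMap.lineMap_apply, vsub_eq_sub, vadd_eq_add]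
      simpa using ((hasDerivAt_id (0:ℝ)).smul_const (z - y)).add_const y
    have hf' : HasFDerivAt f ((InnerProductSpace.toDual ℝ E) g) ((AffineMap.lineMap y z) (0:ℝ)) := by
      simpa [AffineMap.lineMap_apply] using hg.hasFDerivAt
    simpa using hf'.comp_hasDerivAt 0 hc'
  have := hφc.le_slope_of_hasDerivAt (Set.mem_univ (0:ℝ)) (Set.mem_univ (1:ℝ)) one_pos hd
  simpa [slope, φ, AffineMap.lineMap_apply] using this

lemma farkas_fin : ∀ (n : ℕ) (c : Fin n → E) (d : E),
    (∀ ν : E, (∀ i, ⟪c i, ν⟫ ≤ 0) → ⟪d, ν⟫ ≤ 0) →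
    ∃ t : Fin n → ℝ, (∀ i, 0 ≤ t i) ∧ d = ∑ i, t i • c i := by
  intro n
  induction n with
  | zero =>
    intro c d h
    have hd : d = 0 := by
      have := h d (fun i => i.elim0)
      exact real_inner_self_nonpos.mp this
    exact ⟨0, fun i => le_rfl, by simp [hd]⟩
  | succ n ih =>
    intro c d h
    by_cases hcase : ∀ ν : E, (∀ i : Fin n, ⟪c i.castSucc, ν⟫ ≤ 0) → ⟪d, ν⟫ ≤ 0
    · obtain ⟨t, ht0, htd⟩ := ih (fun i => c i.castSucc) d hcase
      refine ⟨Fin.snoc t 0, fun i => ?_, ?_⟩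
      · refine Fin.lastCases ?_ (fun i => ?_) i <;> simp [Fin.snoc_last, Fin.snoc_castSucc]
        exact ht0 i
      · rw [Fin.sum_univ_castSucc]
        simp [Fin.snoc_castSucc, Fin.snoc_last, htd]
    · push_neg at hcase
      obtain ⟨ν₀, hν₀c, hν₀d⟩ := hcase
      have hβ : 0 < ⟪c (Fin.last n), ν₀⟫ := by
        by_contra hβ
        push_neg at hβ
        have := h ν₀ (fun i => Fin.lastCases hβ hν₀c i)
        linarith
      set β := ⟪c (Fin.last n), ν₀⟫ with hβdef
      set c' : Fin n → E := fun i =>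
        c i.castSucc - (⟪c i.castSucc, ν₀⟫ / β) • c (Fin.last n) with hc'def
      set d' : E := d - (⟪d, ν₀⟫ / β) • c (Fin.last n) with hd'def
      have key : ∀ w : E, (∀ i, ⟪c' i, w⟫ ≤ 0) → ⟪d', w⟫ ≤ 0 := by
        intro w hw
        set ν' : E := w - (⟪c (Fin.last n), w⟫ / β) • ν₀ with hν'def
        have hlast : ⟪c (Fin.last n), ν'⟫ = 0 := by
          simp only [hν'def, inner_sub_right, real_inner_smul_right]
          field_simp
          rw [← hβdef]; ring
        have hci : ∀ i : Fin n, ⟪c i.castSucc, ν'⟫ ≤ 0 := by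
          intro i
          have heq : ⟪c i.castSucc, ν'⟫ = ⟪c' i, w⟫ := by
            simp only [hν'def, hc'def, inner_sub_right, inner_sub_left,
              real_inner_smul_right, real_inner_smul_left]
            ring
          rw [heq]; exact hw i
        have hdν' := h ν' (fun i => Fin.lastCases (le_of_eq hlast) hci i)
        have heq : ⟪d, ν'⟫ = ⟪d', w⟫ := by
          simp only [hν'def, hd'def, inner_sub_right, inner_sub_left,
            real_inner_smul_right, real_inner_smul_left]
          ring
        linarith [heq ▸ hdν']
      obtain ⟨t', ht'0, ht'd⟩ := ih c' d' key
      set s : ℝ := ⟪d, ν₀⟫ / β - ∑ i, t' i * (⟪c i.castSucc, ν₀⟫ / β) with hsdef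
      have hs : 0 ≤ s := by
        have h1 : ∑ i, t' i * (⟪c i.castSucc, ν₀⟫ / β) ≤ 0 :=
          Finset.sum_nonpos fun i _ =>
            mul_nonpos_of_nonneg_of_nonpos (ht'0 i)
              (div_nonpos_of_nonpos_of_nonneg (hν₀c i) hβ.le)
        have h2 : 0 < ⟪d, ν₀⟫ / β := div_pos hν₀d hβ
        simp only [hsdef]; linarith
      refine ⟨Fin.snoc t' s, fun i => Fin.lastCases (by simpa using hs) (fun i => by
        simpa using ht'0 i) i, ?_⟩
      rw [Fin.sum_univ_castSucc]
      simp only [Fin.snoc_castSucc, Fin.snoc_last]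
      have expand : d = ∑ i, t' i • c' i + (⟪d, ν₀⟫ / β) • c (Fin.last n) := by
        rw [← ht'd]; simp [hd'def]
      rw [expand]
      simp only [hc'def, smul_sub, Finset.sum_sub_distrib, smul_smul, hsdef, sub_smul,
        Finset.sum_smul]
      abel

lemma farkas {κ : Type*} [Fintype κ] (c : κ → E) (d : E)
    (h : ∀ ν : E, (∀ i, ⟪c i, ν⟫ ≤ 0) → ⟪d, ν⟫ ≤ 0) :
    ∃ t : κ → ℝ, (∀ i, 0 ≤ t i) ∧ d = ∑ i, t i • c i := by
  let e := Fintype.equivFin κ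
  obtain ⟨t, ht0, htd⟩ := farkas_fin (Fintype.card κ) (c ∘ e.symm) d
    (fun ν hν => h ν fun i => by simpa using hν (e i))
  refine ⟨t ∘ e, fun i => ht0 _, ?_⟩
  rw [htd]
  rw [← Equiv.sum_comp e (fun i => t i • (c ∘ e.symm) i)]
  simp

end AuxLemmas

/-- MPCC-to-bilevel: under convexity of the lower level and the Abadie CQ for `K(x)` at every
feasible point, if `(x̄, ȳ, λ̄, μ̄)` is an optimal solution of the MPCC reformulation, then
`(x̄, ȳ)` is an optimal solution of the optimistic bilevel problem. -/
theorem MPCC_to_bilevel {p q : ℕ} {I J : Type*} [Fintype I] [Fintype J]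
    (X : Set (EuclideanSpace ℝ (Fin p)))
    (θl θf : EuclideanSpace ℝ (Fin p) → EuclideanSpace ℝ (Fin q) → ℝ)
    (hI : I → EuclideanSpace ℝ (Fin p) → EuclideanSpace ℝ (Fin q) → ℝ)
    (gJ : J → EuclideanSpace ℝ (Fin p) → EuclideanSpace ℝ (Fin q) → ℝ)
    (hθf : ∀ x ∈ X, ConvexOn ℝ Set.univ (θf x) ∧ ContDiff ℝ 1 (θf x))
    (hg : ∀ x ∈ X, ∀ j, ConvexOn ℝ Set.univ (gJ j x) ∧ ContDiff ℝ 1 (gJ j x))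
    (hh : ∀ x ∈ X, ∀ i, ∃ (φ : EuclideanSpace ℝ (Fin q) →ₗ[ℝ] ℝ) (c : ℝ),
      ∀ y, hI i x y = φ y + c)
    (hKne : ∀ x ∈ X, (lowerFeasSet hI gJ x).Nonempty)
    (hKcpt : ∀ x ∈ X, IsCompact (lowerFeasSet hI gJ x))
    (hCQ : ∀ x ∈ X, ∀ y ∈ lowerFeasSet hI gJ x,
      bouligandTangentCone (lowerFeasSet hI gJ x) y = linearizedConeLower hI gJ x y)
    (xbar : EuclideanSpace ℝ (Fin p)) (ybar : EuclideanSpace ℝ (Fin q))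
    (lambar : I → ℝ) (mubar : J → ℝ)
    (hfeas : MPCCFeasible X θf hI gJ xbar ybar lambar mubar)
    (hopt : ∀ (x : EuclideanSpace ℝ (Fin p)) (y : EuclideanSpace ℝ (Fin q))
      (lam : I → ℝ) (mu : J → ℝ),
      MPCCFeasible X θf hI gJ x y lam mu → θl xbar ybar ≤ θl x y) :
    (xbar ∈ X ∧ ybar ∈ lowerSolSet θf hI gJ xbar) ∧
    ∀ x ∈ X, ∀ y ∈ lowerSolSet θf hI gJ x, θl xbar ybar ≤ θl x y := by
  classical
  obtain ⟨hxbarX, hstat, hmu0, hcs, hh0, hg0⟩ := hfeas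
  -- gradient of affine constraint behaves affinely
  have hgradh : ∀ x ∈ X, ∀ (i : I) (y y' : EuclideanSpace ℝ (Fin q)),
      ⟪gradient (hI i x) y, y' - y⟫ = hI i x y' - hI i x y := by
    intro x hx i y y'
    obtain ⟨φ, cst, hspec⟩ := hh x hx i
    set ψ := LinearMap.toContinuousLinearMap φ with hψ
    have hfun : hI i x = fun v => ψ v + cst := by
      funext v
      simpa [hψ] using hspec v
    have hfd : HasFDerivAt (hI i x) ψ y := by
      rw [hfun]; exact (ψ.hasFDerivAt).add_const cst
    have hgd : HasGradientAt (hI i x)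
        ((InnerProductSpace.toDual ℝ (EuclideanSpace ℝ (Fin q))).symm ψ) y :=
      hasFDerivAt_iff_hasGradientAt.mp hfd
    rw [hgd.gradient, InnerProductSpace.toDual_symm_apply, hfun]
    simp [map_sub]
  have hdiffθf : ∀ x ∈ X, ∀ y : EuclideanSpace ℝ (Fin q),
      HasGradientAt (θf x) (gradient (θf x) y) y := fun x hx y =>
    (((hθf x hx).2.differentiable one_ne_zero) y).hasGradientAt
  have hdiffg : ∀ x ∈ X, ∀ (j : J) (y : EuclideanSpace ℝ (Fin q)),
      HasGradientAt (gJ j x) (gradient (gJ j x) y) y := fun x hx j y =>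
    (((hg x hx j).2.differentiable one_ne_zero) y).hasGradientAt
  -- Part 1: ybar ∈ S(xbar)
  have hybarS : ybar ∈ lowerSolSet θf hI gJ xbar := by
    refine ⟨⟨hh0, hg0⟩, fun y' hy' => ?_⟩
    have hθineq : ⟪gradient (θf xbar) ybar, y' - ybar⟫ ≤ θf xbar y' - θf xbar ybar :=
      grad_ineq (hθf xbar hxbarX).1 (hdiffθf xbar hxbarX ybar)
    have hsum1 : ∑ i, lambar i * ⟪gradient (hI i xbar) ybar, y' - ybar⟫ = 0 :=
      Finset.sum_eq_zero fun i _ => by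
        rw [hgradh xbar hxbarX i ybar y', hy'.1 i, hh0 i]; ring
    have hsum2 : ∑ j, mubar j * ⟪gradient (gJ j xbar) ybar, y' - ybar⟫ ≤ 0 :=
      Finset.sum_nonpos fun j _ => by
        have h1 : ⟪gradient (gJ j xbar) ybar, y' - ybar⟫ ≤ gJ j xbar y' - gJ j xbar ybar :=
          grad_ineq (hg xbar hxbarX j).1 (hdiffg xbar hxbarX j ybar)
        have h2 := mul_le_mul_of_nonneg_left h1 (hmu0 j)
        have h3 := hcs j
        have h4 : mubar j * gJ j xbar y' ≤ 0 :=
          mul_nonpos_of_nonneg_of_nonpos (hmu0 j) (hy'.2 j)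
        nlinarith
    have hstat' : gradient (θf xbar) ybar
        = -(∑ i, lambar i • gradient (hI i xbar) ybar)
          - ∑ j, mubar j • gradient (gJ j xbar) ybar := by
      rw [add_assoc] at hstat
      rw [eq_neg_of_add_eq_zero_left hstat]
      abel
    have hA : ⟪gradient (θf xbar) ybar, y' - ybar⟫
        = -(∑ i, lambar i * ⟪gradient (hI i xbar) ybar, y' - ybar⟫)
          - ∑ j, mubar j * ⟪gradient (gJ j xbar) ybar, y' - ybar⟫ := by
      rw [hstat']
      simp only [inner_sub_left, inner_neg_left, sum_inner, real_inner_smul_left]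
    linarith
  -- Part 2: KKT multipliers exist for any bilevel-feasible point
  have hmult : ∀ x ∈ X, ∀ y ∈ lowerSolSet θf hI gJ x,
      ∃ (lam : I → ℝ) (mu : J → ℝ), MPCCFeasible X θf hI gJ x y lam mu := by
    intro x hx y hy
    obtain ⟨⟨hhy, hgy⟩, hymin⟩ := hy
    -- first-order optimality on the tangent cone
    have hfo : ∀ ν ∈ bouligandTangentCone (lowerFeasSet hI gJ x) y,
        0 ≤ ⟪gradient (θf x) y, ν⟫ := by
      intro ν hν
      obtain ⟨νs, t, hνs, ht0, htlim, hmem⟩ := hν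
      have hz : Tendsto (fun k => y + t k • νs k) atTop (𝓝 y) := by
        have h1 : Tendsto (fun k => t k • νs k) atTop (𝓝 ((0:ℝ) • ν)) := htlim.smul hνs
        rw [zero_smul] at h1
        simpa using (tendsto_const_nhds (x := y) (f := atTop)).add h1
      have hgc : Continuous fun v => gradient (θf x) v := by
        have h1 : Continuous (fderiv ℝ (θf x)) := ((hθf x hx).2).continuous_fderiv one_ne_zero
        exact (InnerProductSpace.toDual ℝ (EuclideanSpace ℝ (Fin q))).symm.continuous.comp h1
      have hlim : Tendsto (fun k => ⟪gradient (θf x) (y + t k • νs k), νs k⟫) atTop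
          (𝓝 ⟪gradient (θf x) y, ν⟫) := ((hgc.tendsto y).comp hz).inner hνs
      refine ge_of_tendsto' hlim fun k => ?_
      have hmin := hymin _ (hmem k)
      have hgi := grad_ineq (hθf x hx).1 (hdiffθf x hx (y + t k • νs k)) (z := y)
      have h2 : ⟪gradient (θf x) (y + t k • νs k), y - (y + t k • νs k)⟫ ≤ 0 :=
        le_trans hgi (by linarith)
      have h3 : y - (y + t k • νs k) = -(t k • νs k) := by abel
      rw [h3, inner_neg_right, real_inner_smul_right] at h2
      nlinarith [ht0 k]
    -- Farkas lemma
    set Gf := gradient (θf x) y with hGfdef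
    set cvec : (I ⊕ I ⊕ {j : J // gJ j x y = 0}) → EuclideanSpace ℝ (Fin q) :=
      Sum.elim (fun i => gradient (hI i x) y)
        (Sum.elim (fun i => -gradient (hI i x) y)
          (fun j => gradient (gJ j.1 x) y)) with hcvecdef
    have hyp : ∀ ν : EuclideanSpace ℝ (Fin q), (∀ k, ⟪cvec k, ν⟫ ≤ 0) → ⟪-Gf, ν⟫ ≤ 0 := by
      intro ν hν
      have hlin : ν ∈ linearizedConeLower hI gJ x y := by
        constructor
        · intro i
          have h1 := hν (Sum.inl i)
          have h2 := hν (Sum.inr (Sum.inl i))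
          simp only [hcvecdef, Sum.elim_inl, Sum.elim_inr, inner_neg_left] at h1 h2
          linarith
        · intro j hj
          exact hν (Sum.inr (Sum.inr ⟨j, hj⟩))
      have h0 := hfo ν (by rw [hCQ x hx y ⟨hhy, hgy⟩]; exact hlin)
      rw [inner_neg_left]
      linarith
    obtain ⟨t, ht0, htd⟩ := farkas cvec (-Gf) hyp
    rw [Fintype.sum_sum_type, Fintype.sum_sum_type] at htd
    simp only [hcvecdef, Sum.elim_inl, Sum.elim_inr, smul_neg] at htd
    set lam : I → ℝ := fun i => t (Sum.inl i) - t (Sum.inr (Sum.inl i)) with hlamdef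
    set mu : J → ℝ := fun j =>
      if hj : gJ j x y = 0 then t (Sum.inr (Sum.inr ⟨j, hj⟩)) else 0 with hmudef
    have hmunneg : ∀ j, 0 ≤ mu j := by
      intro j
      rw [hmudef]
      dsimp only
      split
      · exact ht0 _
      · exact le_rfl
    have hmucs : ∀ j, mu j * gJ j x y = 0 := by
      intro j
      rw [hmudef]
      dsimp only
      split
      · rename_i hj; rw [hj]; ring
      · ring
    refine ⟨lam, mu, hx, ?_, hmunneg, hmucs, hhy, hgy⟩
    -- stationarity
    have hsum1 : ∑ i, lam i • gradient (hI i x) y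
        = ∑ i, t (Sum.inl i) • gradient (hI i x) y
          - ∑ i, t (Sum.inr (Sum.inl i)) • gradient (hI i x) y := by
      rw [← Finset.sum_sub_distrib]
      exact Finset.sum_congr rfl fun i _ => by rw [hlamdef]; exact sub_smul _ _ _
    have hsum2 : ∑ j, mu j • gradient (gJ j x) y
        = ∑ j : {j : J // gJ j x y = 0}, t (Sum.inr (Sum.inr j)) • gradient (gJ j.1 x) y := by
      have hstep1 : ∑ j, mu j • gradient (gJ j x) y
          = ∑ j ∈ Finset.univ.filter (fun j => gJ j x y = 0), mu j • gradient (gJ j x) y := by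
        symm
        apply Finset.sum_filter_of_ne
        intro j _ hne
        by_contra hj
        have hz : mu j = 0 := by rw [hmudef]; exact dif_neg hj
        rw [hz, zero_smul] at hne
        exact hne rfl
      have hstep2 : ∑ j ∈ Finset.univ.filter (fun j => gJ j x y = 0), mu j • gradient (gJ j x) y
          = ∑ j : {j : J // gJ j x y = 0}, mu j.1 • gradient (gJ j.1 x) y :=
        Finset.sum_subtype _ (fun j => by simp) _
      rw [hstep1, hstep2]
      refine Finset.sum_congr rfl fun j _ => ?_
      have : mu j.1 = t (Sum.inr (Sum.inr j)) := by
        rw [hmudef]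
        dsimp only
        rw [dif_pos j.2]
      rw [this]
    rw [hsum1, hsum2]
    rw [Finset.sum_neg_distrib, neg_eq_iff_eq_neg] at htd
    rw [← hGfdef, htd]
    abel
  refine ⟨⟨hxbarX, hybarS⟩, fun x hx y hy => ?_⟩
  obtain ⟨lam, mu, hfe⟩ := hmult x hx y hy
  exact hopt x y lam mu hfe
end
end

section
/- (Existence of a valid big-M bound.) Let A_l ∈ ℝ^{k×p}, b_l ∈ ℝ^k, A_f ∈ ℝ^{m×p}, B_f ∈ ℝ^{m×q}, b_f ∈ ℝ^m, c_f ∈ ℝ^q. There exists M > 0 such that for every pair (x,y) with A_l x ≤ b_l and y an optimal solution of the linear program minimize c_fᵀ y subject to A_f x + B_f y ≤ b_f, there exists μ ∈ ℝ^m with 0 ≤ μ and μ_i ≤ M for all i ∈ [m], satisfying −B_fᵀ μ = c_f and μ_i (A_f x + B_f y − b_f)_i = 0 for all i ∈ [m]. -/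
open Matrix
open Finset

open Finset

lemma cone_caratheodory {V : Type*} [AddCommGroup V] [Module ℝ V]
    {ι : Type*} [Fintype ι] [DecidableEq ι] (w : ι → V) :
    ∀ (n : ℕ) (μ : ι → ℝ), (Finset.univ.filter (fun i => μ i ≠ 0)).card ≤ n →
      (∀ i, 0 ≤ μ i) →
    ∃ ν : ι → ℝ, (∀ i, 0 ≤ ν i) ∧ (∑ i, ν i • w i = ∑ i, μ i • w i) ∧
      LinearIndependent ℝ (fun i : {i // ν i ≠ 0} => w i) := by
  intro n
  induction n with
  | zero =>
      intro μ hcard _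
      have hμ : ∀ i, μ i = 0 := by
        intro i
        by_contra hi
        have : i ∈ Finset.univ.filter (fun i => μ i ≠ 0) := by simp [hi]
        have := Finset.card_pos.mpr ⟨i, this⟩
        omega
      refine ⟨μ, fun i => (hμ i).ge, rfl, ?_⟩
      have : IsEmpty {i // μ i ≠ 0} := ⟨fun ⟨i, hi⟩ => hi (hμ i)⟩
      exact linearIndependent_empty_type
  | succ n ih =>
      intro μ hcard hμ
      by_cases hli : LinearIndependent ℝ (fun i : {i // μ i ≠ 0} => w i)
      · exact ⟨μ, hμ, rfl, hli⟩
      · obtain ⟨g, hgsum, j₀, hj₀⟩ := Fintype.not_linearIndependent_iff.mp hli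
        set lam0 : ι → ℝ := fun i => if h : μ i ≠ 0 then g ⟨i, h⟩ else 0 with hlam0
        have hsum0 : ∑ i, lam0 i • w i = 0 := by
          calc ∑ i, lam0 i • w i
              = ∑ i ∈ Finset.univ.filter (fun i => μ i ≠ 0), lam0 i • w i := by
                refine (Finset.sum_filter_of_ne ?_).symm
                intro i _ hne h
                simp [hlam0, h] at hne
            _ = ∑ i : {i // μ i ≠ 0}, lam0 i.1 • w i.1 :=
                Finset.sum_subtype _ (by simp) (fun i => lam0 i • w i)
            _ = ∑ i : {i // μ i ≠ 0}, g i • w i.1 :=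
                Finset.sum_congr rfl (fun i _ => by simp [hlam0, i.2])
            _ = 0 := hgsum
        have hsupp0 : ∀ i, μ i = 0 → lam0 i = 0 := fun i hi => by simp [hlam0, hi]
        have hex0 : ∃ i, lam0 i ≠ 0 := ⟨j₀, by simp [hlam0, j₀.2, hj₀]⟩
        obtain ⟨lam, hsum, hsupp, i₁, hi₁⟩ :
            ∃ lam : ι → ℝ, ∑ i, lam i • w i = 0 ∧ (∀ i, μ i = 0 → lam i = 0) ∧
              ∃ i, 0 < lam i := by
          by_cases hpos : ∃ i, 0 < lam0 i
          · exact ⟨lam0, hsum0, hsupp0, hpos⟩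
          · push_neg at hpos
            obtain ⟨i, hi⟩ := hex0
            refine ⟨-lam0, by simp [hsum0], fun i hi => by simp [hsupp0 i hi], i, ?_⟩
            simpa using lt_of_le_of_ne (hpos i) hi
        set T : Finset ι := Finset.univ.filter (fun i => 0 < lam i) with hT
        have hTne : T.Nonempty := ⟨i₁, by simp [hT, hi₁]⟩
        set r : ℝ := T.inf' hTne (fun i => μ i / lam i) with hr
        obtain ⟨i₀, hi₀T, hi₀⟩ := Finset.exists_mem_eq_inf' hTne (fun i => μ i / lam i)
        have hlami₀ : 0 < lam i₀ := by simpa [hT] using hi₀T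
        have hrle : ∀ i ∈ T, r ≤ μ i / lam i := fun i hi => Finset.inf'_le _ hi
        have hr0 : 0 ≤ r := by
          rw [hr, Finset.le_inf'_iff]
          intro i hi
          have hl : 0 < lam i := by simpa [hT] using hi
          exact div_nonneg (hμ i) hl.le
        set μ' : ι → ℝ := fun i => μ i - r * lam i with hμ'
        have hμ'0 : ∀ i, 0 ≤ μ' i := by
          intro i
          by_cases hlami : 0 < lam i
          · have := hrle i (by simp [hT, hlami])
            simp only [hμ', sub_nonneg]
            calc r * lam i ≤ (μ i / lam i) * lam i := by
                  exact mul_le_mul_of_nonneg_right (hrle i (by simp [hT, hlami])) hlami.le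
              _ = μ i := div_mul_cancel₀ _ hlami.ne'
          · push_neg at hlami
            have : r * lam i ≤ 0 := mul_nonpos_of_nonneg_of_nonpos hr0 hlami
            simp only [hμ']
            linarith [hμ i]
        have hμ'sum : ∑ i, μ' i • w i = ∑ i, μ i • w i := by
          simp only [hμ', sub_smul, mul_smul, Finset.sum_sub_distrib]
          rw [← Finset.smul_sum, hsum, smul_zero, sub_zero]
        have hμ'i₀ : μ' i₀ = 0 := by
          show μ i₀ - r * lam i₀ = 0
          rw [hr, hi₀, div_mul_cancel₀ _ hlami₀.ne', sub_self]
        have hss : Finset.univ.filter (fun i => μ' i ≠ 0) ⊂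
            Finset.univ.filter (fun i => μ i ≠ 0) := by
          refine ⟨fun i hi => ?_, fun hsub => ?_⟩
          · simp only [Finset.mem_filter, Finset.mem_univ, true_and] at hi ⊢
            intro h0
            exact hi (by simp [hμ', h0, hsupp i h0])
          · have hμi₀ : μ i₀ ≠ 0 := by
              intro h0
              exact hlami₀.ne' (hsupp i₀ h0)
            have := hsub (by simp [hμi₀] : i₀ ∈ _)
            simp only [Finset.mem_filter] at this
            exact this.2 hμ'i₀
        have := Finset.card_lt_card hss
        obtain ⟨ν, h1, h2, h3⟩ := ih μ' (by omega) hμ'0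
        exact ⟨ν, h1, h2.trans hμ'sum, h3⟩

lemma isClosed_fg_cone {V : Type*} [NormedAddCommGroup V] [NormedSpace ℝ V]
    [FiniteDimensional ℝ V]
    {ι : Type*} [Fintype ι] [DecidableEq ι] (w : ι → V) :
    IsClosed {x : V | ∃ μ : ι → ℝ, (∀ i, 0 ≤ μ i) ∧ ∑ i, μ i • w i = x} := by
  classical
  let L : (S : Finset ι) → ({i // i ∈ S} → ℝ) →ₗ[ℝ] V := fun S =>
    { toFun := fun ν => ∑ i : {i // i ∈ S}, ν i • w i.1
      map_add' := by intro a b; simp [add_smul, Finset.sum_add_distrib]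
      map_smul' := by intro c a; simp [mul_smul, ← Finset.smul_sum]
    }
  let A : Finset ι → Set V := fun S => (L S) '' {ν | ∀ i, 0 ≤ ν i}
  have hset : {x : V | ∃ μ : ι → ℝ, (∀ i, 0 ≤ μ i) ∧ ∑ i, μ i • w i = x} =
      ⋃ S ∈ {S : Finset ι | LinearIndependent ℝ (fun i : {i // i ∈ S} => w i.1)}, A S := by
    ext x
    simp only [Set.mem_setOf_eq, Set.mem_iUnion, A, Set.mem_image]
    constructor
    · rintro ⟨μ, hμ, hsum⟩
      obtain ⟨ν, hν0, hνsum, hνli⟩ := cone_caratheodory w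
        (Finset.univ.filter (fun i => μ i ≠ 0)).card μ le_rfl hμ
      set S : Finset ι := Finset.univ.filter (fun i => ν i ≠ 0) with hS
      have hmem : ∀ i : ι, i ∈ S ↔ ν i ≠ 0 := fun i => by simp [hS]
      have hli' : LinearIndependent ℝ (fun i : {i // i ∈ S} => w i.1) := by
        have hfe : (fun i : {i // i ∈ S} => w i.1) =
            (fun i : {i // ν i ≠ 0} => w i.1) ∘ (Equiv.subtypeEquivRight hmem) := by
          funext i; simp [Equiv.subtypeEquivRight]; rfl
        rw [hfe]
        exact hνli.comp _ (Equiv.injective _)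
      refine ⟨S, hli', fun i => ν i.1, fun i => hν0 i.1, ?_⟩
      show ∑ i : {i // i ∈ S}, ν i.1 • w i.1 = x
      calc ∑ i : {i // i ∈ S}, ν i.1 • w i.1
          = ∑ i ∈ S, ν i • w i := Finset.sum_coe_sort S (fun i => ν i • w i)
        _ = ∑ i, ν i • w i := by
            rw [hS]
            exact Finset.sum_filter_of_ne (fun i _ h => by
              intro hn; exact h (by simp [hn]))
        _ = x := hνsum.trans hsum
    · rintro ⟨S, hSli, ν, hν0, hνsum⟩
      refine ⟨fun i => if h : i ∈ S then ν ⟨i, h⟩ else 0, ?_, ?_⟩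
      · intro i; by_cases h : i ∈ S <;> simp [h, hν0]
      · rw [← hνsum]
        show _ = ∑ i : {i // i ∈ S}, ν i • w i.1
        calc ∑ i : ι, (if h : i ∈ S then ν ⟨i, h⟩ else 0) • w i
            = ∑ i ∈ S, (if h : i ∈ S then ν ⟨i, h⟩ else 0) • w i :=
              (Finset.sum_subset (Finset.subset_univ S) (fun i _ hi => by simp [hi])).symm
          _ = ∑ i : {i // i ∈ S}, (if h : i.1 ∈ S then ν ⟨i.1, h⟩ else 0) • w i.1 :=
              (Finset.sum_coe_sort S (fun i => (if h : i ∈ S then ν ⟨i, h⟩ else 0) • w i)).symm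
          _ = ∑ i : {i // i ∈ S}, ν i • w i.1 :=
              Finset.sum_congr rfl (fun i _ => by simp [i.2])
  rw [hset]
  refine Set.Finite.isClosed_biUnion (Set.toFinite _) ?_
  intro S hS
  have hker : LinearMap.ker (L S) = ⊥ := by
    rw [LinearMap.ker_eq_bot']
    intro ν hν
    exact funext (Fintype.linearIndependent_iff.mp hS ν hν)
  have hemb := LinearMap.isClosedEmbedding_of_injective (𝕜 := ℝ) hker
  refine hemb.isClosedMap _ ?_
  have : {ν : {i // i ∈ S} → ℝ | ∀ i, 0 ≤ ν i} =
      ⋂ i, (fun ν : {i // i ∈ S} → ℝ => ν i) ⁻¹' Set.Ici 0 := by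
    ext ν; simp [Set.mem_iInter]
  rw [this]
  exact isClosed_iInter fun i => IsClosed.preimage (continuous_apply i) isClosed_Ici

open scoped InnerProductSpace in
lemma farkas_cone {V : Type*} [NormedAddCommGroup V] [InnerProductSpace ℝ V]
    [FiniteDimensional ℝ V]
    {ι : Type*} [Fintype ι] [DecidableEq ι] (w : ι → V) (t : V)
    (h : ∀ v : V, (∀ i, ⟪w i, v⟫_ℝ ≤ 0) → ⟪t, v⟫_ℝ ≤ 0) :
    ∃ μ : ι → ℝ, (∀ i, 0 ≤ μ i) ∧ ∑ i, μ i • w i = t := by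
  classical
  by_contra hc
  set C : Set V := {x : V | ∃ μ : ι → ℝ, (∀ i, 0 ≤ μ i) ∧ ∑ i, μ i • w i = x} with hC
  let K : ConvexCone ℝ V :=
    { carrier := C
      smul_mem' := by
        rintro c hc x ⟨μ, hμ, hsum⟩
        exact ⟨fun i => c * μ i, fun i => mul_nonneg hc.le (hμ i), by
          simp only [mul_smul, ← Finset.smul_sum, hsum]⟩
      add_mem' := by
        rintro x ⟨μ, hμ, hsum⟩ y ⟨ν, hν, hsum'⟩
        exact ⟨fun i => μ i + ν i, fun i => add_nonneg (hμ i) (hν i), by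
          simp only [add_smul, Finset.sum_add_distrib, hsum, hsum']⟩ }
  have hne : (K : Set V).Nonempty := ⟨0, ⟨0, fun i => le_rfl, by simp⟩⟩
  have hcl : IsClosed (K : Set V) := isClosed_fg_cone w
  have htK : t ∉ K := fun ⟨μ, hμ, hsum⟩ => hc ⟨μ, hμ, hsum⟩
  obtain ⟨y, hyK, hyt⟩ :=
    ProperCone.hyperplane_separation' (E := V)
      ({ carrier := C
         add_mem' := fun ha hb => K.add_mem ha hb
         zero_mem' := ⟨0, fun i => le_rfl, by simp⟩
         smul_mem' := by
           rintro ⟨c, hc⟩ x ⟨μ, hμ, hsum⟩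
           refine ⟨fun i => c * μ i, fun i => mul_nonneg hc (hμ i), ?_⟩
           change ∑ i, (c * μ i) • w i = c • x
           simp only [mul_smul, ← Finset.smul_sum, hsum]
         isClosed' := hcl } : ProperCone ℝ V) htK
  have hwi : ∀ i, ⟪w i, -y⟫_ℝ ≤ 0 := by
    intro i
    have hwiK : w i ∈ K := ⟨fun j => if j = i then 1 else 0, fun j => by positivity, by
      simp [ite_smul]⟩
    have := hyK _ hwiK
    rw [inner_neg_right]
    linarith
  have := h (-y) hwi
  rw [inner_neg_right, real_inner_comm] at this
  linarith [real_inner_comm t y]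

open Matrix in
lemma kkt_exists {m q : ℕ} (B : Matrix (Fin m) (Fin q) ℝ) (c : Fin q → ℝ)
    (act : Fin m → Prop) [DecidablePred act]
    (h : ∀ v : Fin q → ℝ, (∀ i, act i → B.mulVec v i ≤ 0) → 0 ≤ c ⬝ᵥ v) :
    ∃ μ : Fin m → ℝ, (∀ i, 0 ≤ μ i) ∧ (∀ i, ¬ act i → μ i = 0) ∧
      -(B.transpose.mulVec μ) = c := by
  classical
  set w : Fin m → EuclideanSpace ℝ (Fin q) :=
    fun i => if act i then WithLp.toLp 2 (fun j => B i j) else 0 with hw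
  have hinner : ∀ (x : EuclideanSpace ℝ (Fin q)) (v : EuclideanSpace ℝ (Fin q)),
      (inner ℝ x v : ℝ) = ∑ j, x j * v j := by
    intro x v
    simp [PiLp.inner_apply, RCLike.inner_apply, mul_comm]
  have hyp : ∀ v : EuclideanSpace ℝ (Fin q), (∀ i, (inner ℝ (w i) v : ℝ) ≤ 0) →
      (inner ℝ (WithLp.toLp 2 (-c) : EuclideanSpace ℝ (Fin q)) v : ℝ) ≤ 0 := by
    intro v hv
    have hv' : ∀ i, act i → B.mulVec v i ≤ 0 := by
      intro i hi
      have := hv i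
      rw [hinner] at this
      simpa [hw, hi, Matrix.mulVec, dotProduct, PiLp.toLp_apply] using this
    have := h v hv'
    rw [hinner]
    have hdot : ∑ j, (-c : Fin q → ℝ) j * v j = -(c ⬝ᵥ v) := by
      simp [dotProduct, Finset.sum_neg_distrib]
    calc ∑ j, (-c : Fin q → ℝ) j * v j = -(c ⬝ᵥ v) := hdot
      _ ≤ 0 := by linarith
  obtain ⟨μ, hμ0, hμsum⟩ := farkas_cone w (WithLp.toLp 2 (-c) : EuclideanSpace ℝ (Fin q)) hyp
  · refine ⟨fun i => if act i then μ i else 0, ?_, ?_, ?_⟩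
    · intro i; by_cases hi : act i <;> simp [hi, hμ0 i]
    · intro i hi; simp [hi]
    · funext j
      have hj := congrArg (fun v : EuclideanSpace ℝ (Fin q) => v j) hμsum
      have hlhs : (∑ i, μ i • w i) j = ∑ i, μ i * w i j := by
        rw [WithLp.ofLp_sum, Finset.sum_apply]; rfl
      have : ∑ i, μ i * w i j = -c j := by rw [← hlhs, hj]; rfl
      have heq : ∀ i, (if act i then μ i else 0) * B i j = μ i * w i j := by
        intro i; by_cases hi : act i <;> simp [hw, hi, PiLp.toLp_apply]
      show -(∑ i, B.transpose j i * (if act i then μ i else 0)) = c j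
      calc -(∑ i, B.transpose j i * (if act i then μ i else 0))
          = -(∑ i, μ i * w i j) := by
            congr 1
            refine Finset.sum_congr rfl (fun i _ => ?_)
            rw [Matrix.transpose_apply, mul_comm, heq i]
        _ = c j := by rw [this]; ring


/-- Existence of a valid big-M bound: there is `M > 0` such that every feasible point `(x, y)`
of the linear bilevel problem admits a lower-level KKT multiplier `μ` with `0 ≤ μᵢ ≤ M`. -/
theorem exists_bigM_bound {k p m q : ℕ}
    (Al : Matrix (Fin k) (Fin p) ℝ) (bl : Fin k → ℝ)
    (Af : Matrix (Fin m) (Fin p) ℝ) (Bf : Matrix (Fin m) (Fin q) ℝ)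
    (bf : Fin m → ℝ) (cf : Fin q → ℝ) :
    ∃ M : ℝ, 0 < M ∧
      ∀ (x : Fin p → ℝ) (y : Fin q → ℝ),
        Al.mulVec x ≤ bl →
        (Af.mulVec x + Bf.mulVec y ≤ bf ∧
          ∀ y' : Fin q → ℝ, Af.mulVec x + Bf.mulVec y' ≤ bf → cf ⬝ᵥ y ≤ cf ⬝ᵥ y') →
        ∃ μ : Fin m → ℝ, 0 ≤ μ ∧ (∀ i, μ i ≤ M) ∧
          -(Bf.transpose.mulVec μ) = cf ∧
          ∀ i, μ i * (Af.mulVec x + Bf.mulVec y - bf) i = 0 := by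
  classical
  set P : Finset (Fin m) → Prop := fun I => ∃ μ : Fin m → ℝ, 0 ≤ μ ∧
      (∀ i, i ∉ I → μ i = 0) ∧ -(Bf.transpose.mulVec μ) = cf with hP
  set g : Finset (Fin m) → (Fin m → ℝ) := fun I => if h : P I then h.choose else 0 with hg
  have hgspec : ∀ I, P I → (0 ≤ g I ∧ (∀ i, i ∉ I → g I i = 0) ∧
      -(Bf.transpose.mulVec (g I)) = cf) := by
    intro I hI
    simp only [hg, dif_pos hI]
    exact hI.choose_spec
  refine ⟨1 + ∑ I : Finset (Fin m), ∑ i, |g I i|, ?_, ?_⟩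
  · have : (0:ℝ) ≤ ∑ I : Finset (Fin m), ∑ i, |g I i| :=
      Finset.sum_nonneg fun I _ => Finset.sum_nonneg fun i _ => abs_nonneg _
    linarith
  rintro x y hxl ⟨hfeas, hopt⟩
  set z : Fin m → ℝ := Af.mulVec x + Bf.mulVec y with hz
  set I : Finset (Fin m) := Finset.univ.filter (fun i => z i = bf i) with hI
  have hdescent : ∀ v : Fin q → ℝ, (∀ i, z i = bf i → Bf.mulVec v i ≤ 0) → 0 ≤ cf ⬝ᵥ v := by
    intro v hv
    by_contra hneg
    push_neg at hneg
    set F : Finset ℝ := insert 1 (Finset.univ.image fun i =>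
      if 0 < Bf.mulVec v i ∧ z i < bf i then (bf i - z i)/(Bf.mulVec v i) else 1) with hF
    have hFne : F.Nonempty := ⟨1, Finset.mem_insert_self 1 _⟩
    set ε : ℝ := F.min' hFne with hε
    have hεpos : 0 < ε := by
      rw [hε]
      refine (F.lt_min'_iff hFne).mpr ?_
      intro a ha
      rw [hF] at ha
      rcases Finset.mem_insert.mp ha with h1 | h2
      · rw [h1]; norm_num
      · obtain ⟨i, _, hi⟩ := Finset.mem_image.mp h2
        rw [← hi]
        by_cases hcond : 0 < Bf.mulVec v i ∧ z i < bf i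
        · rw [if_pos hcond]
          exact div_pos (sub_pos.mpr hcond.2) hcond.1
        · rw [if_neg hcond]; norm_num
    have hfeas' : Af.mulVec x + Bf.mulVec (y + ε • v) ≤ bf := by
      rw [Pi.le_def]
      intro i
      have hexp : (Af.mulVec x + Bf.mulVec (y + ε • v)) i = z i + ε * Bf.mulVec v i := by
        simp [hz, Matrix.mulVec_add, Matrix.mulVec_smul, add_assoc]
      rw [hexp]
      by_cases hact : z i = bf i
      · have h1 : Bf.mulVec v i ≤ 0 := hv i hact
        nlinarith
      · have hlt : z i < bf i := lt_of_le_of_ne (hfeas i) hact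
        by_cases hBv : Bf.mulVec v i ≤ 0
        · nlinarith
        · push_neg at hBv
          have hεle : ε ≤ (bf i - z i)/(Bf.mulVec v i) := by
            have hmem : (bf i - z i)/(Bf.mulVec v i) ∈ F := by
              rw [hF]
              refine Finset.mem_insert_of_mem ?_
              refine Finset.mem_image.mpr ⟨i, Finset.mem_univ i, ?_⟩
              rw [if_pos ⟨hBv, hlt⟩]
            exact Finset.min'_le F _ hmem
          have := (le_div_iff₀ hBv).mp hεle
          linarith
    have hle := hopt (y + ε • v) hfeas'
    have hdp : cf ⬝ᵥ (y + ε • v) = cf ⬝ᵥ y + ε * (cf ⬝ᵥ v) := by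
      simp [dotProduct_add, dotProduct_smul, smul_eq_mul]
    rw [hdp] at hle
    nlinarith
  have hPI : P I := by
    obtain ⟨μ, h0, hsupp, heq⟩ := kkt_exists Bf cf (fun i => z i = bf i)
      (fun v hv => hdescent v hv)
    exact ⟨μ, Pi.le_def.mpr h0, fun i hi => hsupp i (by simpa [hI] using hi), heq⟩
  obtain ⟨hg0, hgsupp, hgeq⟩ := hgspec I hPI
  refine ⟨g I, hg0, ?_, hgeq, ?_⟩
  · intro i
    have hsum : (0:ℝ) ≤ ∑ I' : Finset (Fin m), ∑ i', |g I' i'| :=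
      Finset.sum_nonneg fun I' _ => Finset.sum_nonneg fun i' _ => abs_nonneg _
    calc g I i ≤ |g I i| := le_abs_self _
      _ ≤ ∑ i', |g I i'| :=
          Finset.single_le_sum (f := fun i' => |g I i'|)
            (fun i' _ => abs_nonneg _) (Finset.mem_univ i)
      _ ≤ ∑ I' : Finset (Fin m), ∑ i', |g I' i'| :=
          Finset.single_le_sum (f := fun I' => ∑ i', |g I' i'|)
            (fun I' _ => Finset.sum_nonneg fun i' _ => abs_nonneg _) (Finset.mem_univ I)
      _ ≤ 1 + ∑ I' : Finset (Fin m), ∑ i', |g I' i'| := by linarith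
  · intro i
    by_cases hzi : z i = bf i
    · have h0 : (Af.mulVec x + Bf.mulVec y - bf) i = 0 := by
        simp only [Pi.sub_apply, ← hz, hzi, sub_self]
      rw [h0, mul_zero]
    · rw [hgsupp i (by simp [hI, hzi]), zero_mul]
end

section
/- (Big-M reformulation, forward direction.) Let A_l, b_l, A_f, B_f, b_f, c_f be as in the linear bilevel problem (LBP) and suppose the set D = {(x,y) : A_l x ≤ b_l, A_f x + B_f y ≤ b_f} is compact. Then there exists M > 0 such that for every feasible point (x,y) of (LBP) (i.e., A_l x ≤ b_l and y minimizes c_fᵀ y over {y : A_f x + B_f y ≤ b_f}), there exist μ ∈ ℝ^m and z ∈ {0,1}^m such that (x,y,μ,z) satisfies: A_l x ≤ b_l, A_f x + B_f y ≤ b_f, −B_fᵀ μ = c_f, μ ≥ 0, μ ≤ M(1−z) componentwise, and b_f − A_f x − B_f y ≤ M z componentwise; moreover if (x,y) is optimal for (LBP), then (x,y,μ,z) is optimal for the problem of minimizing the leader's objective over all such tuples. -/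
section BigMAux

open Finset
open scoped InnerProductSpace

set_option linter.unusedSectionVars false

variable {E : Type*} [NormedAddCommGroup E] [InnerProductSpace ℝ E] [FiniteDimensional ℝ E]
variable {ι : Type*} [Fintype ι]

def coneSet (v : ι → E) : Set E :=
  {x | ∃ t : ι → ℝ, (∀ i, 0 ≤ t i) ∧ x = ∑ i, t i • v i}

def coneOn (v : ι → E) (s : Finset ι) : Set E :=
  {x | ∃ t : ι → ℝ, (∀ i, 0 ≤ t i) ∧ (∀ i, i ∉ s → t i = 0) ∧ x = ∑ i, t i • v i}

lemma coneOn_subset_coneSet (v : ι → E) (s : Finset ι) : coneOn v s ⊆ coneSet v := by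
  rintro x ⟨t, ht, _, hx⟩; exact ⟨t, ht, hx⟩

lemma sum_eq_of_zero_outside (v : ι → E) (s : Finset ι) (t : ι → ℝ)
    (hts : ∀ i, i ∉ s → t i = 0) :
    ∑ i : {i // i ∈ s}, t i • v i = ∑ i : ι, t i • v i := by
  rw [Finset.sum_coe_sort s fun i => t i • v i]
  exact Finset.sum_subset (Finset.subset_univ s) fun i _ hi => by rw [hts i hi, zero_smul]

lemma isClosed_coneOn (v : ι → E) (s : Finset ι)
    (hs : LinearIndependent ℝ (fun i : {i // i ∈ s} => v i)) : IsClosed (coneOn v s) := by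
  classical
  set L : ({i // i ∈ s} → ℝ) →ₗ[ℝ] E :=
    LinearMap.lsum ℝ (fun _ => ℝ) ℕ fun i : {i // i ∈ s} => LinearMap.id.smulRight (v i) with hL
  have hLapp : ∀ u : {i // i ∈ s} → ℝ, L u = ∑ i : {i // i ∈ s}, u i • v i := by
    intro u; simp [hL, LinearMap.lsum_apply]
  have hker : LinearMap.ker L = ⊥ := by
    rw [LinearMap.ker_eq_bot']
    intro u hu
    have := Fintype.linearIndependent_iff.1 hs u (by rw [← hLapp]; exact hu)
    funext i; exact this i
  have hemb := LinearMap.isClosedEmbedding_of_injective hker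
  have hset : coneOn v s = L '' {u : {i // i ∈ s} → ℝ | ∀ i, 0 ≤ u i} := by
    ext x
    constructor
    · rintro ⟨t, ht, hts, hx⟩
      refine ⟨fun i => t i, fun i => ht i, ?_⟩
      rw [hLapp, sum_eq_of_zero_outside v s t hts, hx]
    · rintro ⟨u, hu, rfl⟩
      refine ⟨fun i => if h : i ∈ s then u ⟨i, h⟩ else 0, ?_, ?_, ?_⟩
      · intro i; by_cases h : i ∈ s <;> simp [h, hu _]
      · intro i hi; simp [hi]
      · rw [hLapp, ← sum_eq_of_zero_outside v s _ (fun i hi => by simp [hi])]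
        congr 1
        ext i
        simp [i.2]
  rw [hset]
  refine hemb.isClosedMap _ ?_
  have : {u : {i // i ∈ s} → ℝ | ∀ i, 0 ≤ u i} = ⋂ i, {u | 0 ≤ u i} := by
    ext u; simp [Set.mem_iInter]
  rw [this]
  exact isClosed_iInter fun i => isClosed_le continuous_const (continuous_apply i)

lemma carat_aux (v : ι → E) : ∀ (N : ℕ) (t : ι → ℝ), (∀ i, 0 ≤ t i) →
    ({i | t i ≠ 0} : Finset ι).card ≤ N →
    ∃ s : Finset ι, LinearIndependent ℝ (fun i : {i // i ∈ s} => v i) ∧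
      (∑ i, t i • v i) ∈ coneOn v s := by
  classical
  intro N
  induction N with
  | zero =>
    intro t ht hcard
    have htz : ∀ i, t i = 0 := by
      intro i
      by_contra h
      have : i ∈ ({i | t i ≠ 0} : Finset ι) := by simp [h]
      have := Finset.card_pos.2 ⟨i, this⟩
      omega
    refine ⟨∅, ?_, ⟨t, ht, fun i _ => htz i, rfl⟩⟩
    have : IsEmpty {i : ι // i ∈ (∅ : Finset ι)} := by
      constructor; rintro ⟨i, hi⟩; simp at hi
    exact linearIndependent_empty_type
  | succ N ih =>
    intro t ht hcard
    set s₀ : Finset ι := {i | t i ≠ 0} with hs₀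
    by_cases hind : LinearIndependent ℝ (fun i : {i // i ∈ s₀} => v i)
    · exact ⟨s₀, hind, ⟨t, ht, fun i hi => by simpa [hs₀] using hi, rfl⟩⟩
    · obtain ⟨g, hg0, i₀, hgi₀⟩ := Fintype.not_linearIndependent_iff.1 hind
      -- extend g to c : ι → ℝ, possibly negated so that some entry is positive
      have key : ∀ c : ι → ℝ, (∀ i, c i ≠ 0 → t i ≠ 0) → (∑ i, c i • v i = 0) →
          (∃ i, 0 < c i) →
          ∃ s : Finset ι, LinearIndependent ℝ (fun i : {i // i ∈ s} => v i) ∧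
            (∑ i, t i • v i) ∈ coneOn v s := by
        intro c hsupp hcsum ⟨j, hj⟩
        set T : Finset ι := {i | 0 < c i} with hT
        have hjT : j ∈ T := by simp [hT, hj]
        have hTne : T.Nonempty := ⟨j, hjT⟩
        obtain ⟨i₁, hi₁T, hi₁min⟩ := Finset.exists_mem_eq_inf' hTne fun i => t i / c i
        set lam := T.inf' hTne fun i => t i / c i with hlam
        have hci₁ : 0 < c i₁ := by simpa [hT] using hi₁T
        have hlam_nonneg : 0 ≤ lam := by
          rw [hi₁min]; exact div_nonneg (ht i₁) hci₁.le
        have hlam_le : ∀ i ∈ T, lam ≤ t i / c i := fun i hi => Finset.inf'_le _ hi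
        set t' : ι → ℝ := fun i => t i - lam * c i with ht'
        have ht'_nonneg : ∀ i, 0 ≤ t' i := by
          intro i
          by_cases hc : 0 < c i
          · have hiT : i ∈ T := by simp [hT, hc]
            have := hlam_le i hiT
            have : lam * c i ≤ t i := by
              rw [div_eq_mul_inv] at this
              calc lam * c i ≤ (t i * (c i)⁻¹) * c i := by
                    exact mul_le_mul_of_nonneg_right this hc.le
                _ = t i := by field_simp
            simp [ht']; linarith
          · push_neg at hc
            have : lam * c i ≤ 0 := mul_nonpos_of_nonneg_of_nonpos hlam_nonneg hc
            simp [ht']; linarith [ht i]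
        have ht'i₁ : t' i₁ = 0 := by
          have : lam = t i₁ / c i₁ := hi₁min
          simp only [ht', this]
          field_simp
          simp
        have hti₁ : t i₁ ≠ 0 := hsupp i₁ (ne_of_gt hci₁)
        have hsubset : ({i | t' i ≠ 0} : Finset ι) ⊆ s₀.erase i₁ := by
          intro i hi
          simp only [Finset.mem_filter, Finset.mem_univ, true_and] at hi
          rw [Finset.mem_erase]
          constructor
          · rintro rfl; simp at hi; exact hi ht'i₁
          · simp only [hs₀, Finset.mem_filter, Finset.mem_univ, true_and]
            intro hti
            have hci : c i = 0 := by
              by_contra h; exact hsupp i h hti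
            simp [ht', hti, hci] at hi
        have hcard' : ({i | t' i ≠ 0} : Finset ι).card ≤ N := by
          have h1 : (s₀.erase i₁).card ≤ N := by
            have hi₁s₀ : i₁ ∈ s₀ := by simp [hs₀, hti₁]
            have := Finset.card_erase_of_mem hi₁s₀
            omega
          exact le_trans (Finset.card_le_card hsubset) h1
        have hsum : ∑ i, t' i • v i = ∑ i, t i • v i := by
          simp only [ht', sub_smul, Finset.sum_sub_distrib]
          rw [show ∑ i, (lam * c i) • v i = lam • ∑ i, c i • v i by
            rw [Finset.smul_sum]; congr 1; ext i; rw [smul_smul]]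
          rw [hcsum, smul_zero, sub_zero]
        obtain ⟨s, hsind, hmem⟩ := ih t' ht'_nonneg hcard'
        rw [hsum] at hmem
        exact ⟨s, hsind, hmem⟩
      set c : ι → ℝ := fun i => if h : i ∈ s₀ then g ⟨i, h⟩ else 0 with hc
      have hcsum : ∑ i, c i • v i = 0 := by
        rw [← hg0, ← sum_eq_of_zero_outside v s₀ c (fun i hi => by simp [hc, hi])]
        congr 1; ext i; simp [hc, i.2]
      have hcsupp : ∀ i, c i ≠ 0 → t i ≠ 0 := by
        intro i hci
        by_cases h : i ∈ s₀
        · simpa [hs₀] using h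
        · simp [hc, h] at hci
      have hci₀ : c (i₀ : ι) ≠ 0 := by simp [hc, i₀.2]; convert hgi₀ <;> simp
      rcases lt_or_gt_of_ne hci₀ with hneg | hpos
      · have : ∑ i, (-c) i • v i = 0 := by
          simp only [Pi.neg_apply, neg_smul, Finset.sum_neg_distrib, hcsum, neg_zero]
        refine key (-c) (fun i hi => hcsupp i (by simpa using hi)) this ⟨i₀, by simpa using hneg⟩
      · exact key c hcsupp hcsum ⟨i₀, hpos⟩

lemma isClosed_coneSet [DecidableEq ι] (v : ι → E) : IsClosed (coneSet v) := by
  classical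
  have hset : coneSet v = ⋃ s : Finset ι,
      (if LinearIndependent ℝ (fun i : {i // i ∈ s} => v i) then coneOn v s else ∅) := by
    ext x
    simp only [Set.mem_iUnion]
    constructor
    · rintro ⟨t, ht, rfl⟩
      obtain ⟨s, hsind, hmem⟩ := carat_aux v (({i | t i ≠ 0} : Finset ι).card) t ht le_rfl
      exact ⟨s, by simp [hsind, hmem]⟩
    · rintro ⟨s, hx⟩
      by_cases h : LinearIndependent ℝ (fun i : {i // i ∈ s} => v i)
      · simp only [h, if_true] at hx
        exact coneOn_subset_coneSet v s hx
      · simp [h] at hx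
  rw [hset]
  exact isClosed_iUnion_of_finite fun s => by
    by_cases h : LinearIndependent ℝ (fun i : {i // i ∈ s} => v i) <;>
      simp [h, isClosed_coneOn v s, isClosed_empty]

lemma coneSet_separation [CompleteSpace E] (v : ι → E) {b : E} (hb : b ∉ coneSet v) :
    ∃ w : E, (∀ i, 0 ≤ ⟪v i, w⟫_ℝ) ∧ ⟪w, b⟫_ℝ < 0 := by
  classical
  set K : ConvexCone ℝ E :=
    { carrier := coneSet v
      smul_mem' := by
        rintro c hc x ⟨t, ht, rfl⟩
        exact ⟨fun i => c * t i, fun i => mul_nonneg hc.le (ht i), by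
          rw [Finset.smul_sum]; congr 1; ext i; rw [smul_smul]⟩
      add_mem' := by
        rintro x ⟨t, ht, rfl⟩ x' ⟨t', ht', rfl⟩
        exact ⟨t + t', fun i => add_nonneg (ht i) (ht' i), by
          simp [add_smul, Finset.sum_add_distrib]⟩ } with hK
  have hne : (K : Set E).Nonempty := ⟨0, ⟨fun _ => 0, fun _ => le_rfl, by simp⟩⟩
  have hcl : IsClosed (K : Set E) := isClosed_coneSet v
  obtain ⟨w, hw1, hw2⟩ : ∃ w : E, (∀ x ∈ K, 0 ≤ ⟪x, w⟫_ℝ) ∧ ⟪w, b⟫_ℝ < 0 := by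
    have hpt : K.Pointed := ⟨fun _ => 0, fun _ => le_rfl, by simp⟩
    obtain ⟨w, hw1, hw2⟩ :=
      ProperCone.hyperplane_separation' (⟨K.toPointedCone hpt, hcl⟩ : ProperCone ℝ E) hb
    exact ⟨w, hw1, by rwa [real_inner_comm]⟩
  refine ⟨w, fun i => ?_, hw2⟩
  have hvi : v i ∈ K := ⟨fun j => if j = i then 1 else 0, fun j => by positivity, by simp⟩
  exact hw1 _ hvi

open Matrix in
lemma euclid_sum_apply {n m : ℕ} (t : Fin m → ℝ) (v : Fin m → EuclideanSpace ℝ (Fin n))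
    (j : Fin n) : (∑ i, t i • v i) j = ∑ i, t i * v i j := by
  rw [WithLp.ofLp_sum, Finset.sum_apply]
  rfl

open Matrix in
/-- KKT multipliers for an optimal solution of the LP `min cᵀy s.t. B y ≤ d`. -/
lemma farkas_lp {m q : ℕ} (B : Matrix (Fin m) (Fin q) ℝ) (d : Fin m → ℝ)
    (c : Fin q → ℝ) (y : Fin q → ℝ) (hfeas : B.mulVec y ≤ d)
    (hopt : ∀ y', B.mulVec y' ≤ d → c ⬝ᵥ y ≤ c ⬝ᵥ y') :
    ∃ μ : Fin m → ℝ, (∀ i, 0 ≤ μ i) ∧ B.transpose.mulVec μ = -c ∧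
      ∀ i, (B.mulVec y) i ≠ d i → μ i = 0 := by
  classical
  set v : Fin m → EuclideanSpace ℝ (Fin q) :=
    fun i => if (B.mulVec y) i = d i then (WithLp.toLp 2 (fun j => B i j)) else 0 with hv
  have hvapp : ∀ i j, v i j = if (B.mulVec y) i = d i then B i j else 0 := by
    intro i j
    by_cases h : (B.mulVec y) i = d i <;> simp [hv, h] <;> rfl
  have hmem : (show EuclideanSpace ℝ (Fin q) from WithLp.toLp 2 fun j => -c j) ∈ coneSet v := by
    by_contra hb
    obtain ⟨w, hw1, hw2⟩ := coneSet_separation v hb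
    set w' : Fin q → ℝ := fun j => w j with hw'
    have hcw : 0 < c ⬝ᵥ w' := by
      have h1 : ⟪w, (show EuclideanSpace ℝ (Fin q) from WithLp.toLp 2 fun j => -c j)⟫_ℝ
          = ∑ j, w j * (-c j) := by
        simp [PiLp.inner_apply, RCLike.inner_apply, conj_trivial, mul_comm]
      rw [h1] at hw2
      have h2 : ∑ j, w j * (-c j) = -(c ⬝ᵥ w') := by
        simp [dotProduct, hw', mul_comm]
      linarith [h2 ▸ hw2]
    have hact : ∀ i, (B.mulVec y) i = d i → 0 ≤ (B.mulVec w') i := by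
      intro i hi
      have h1 := hw1 i
      have h2 : ⟪v i, w⟫_ℝ = ∑ j, v i j * w j := by
        simp [PiLp.inner_apply, RCLike.inner_apply, conj_trivial, mul_comm]
      rw [h2] at h1
      have h3 : ∀ j, v i j = B i j := fun j => by simp [hvapp, hi]
      simp only [h3] at h1
      simpa [mulVec, dotProduct, hw'] using h1
    have hlin : ∀ (ε : ℝ) (i : Fin m), (B.mulVec (y - ε • w')) i
        = (B.mulVec y) i - ε * (B.mulVec w') i := by
      intro ε i
      rw [Matrix.mulVec_sub, Matrix.mulVec_smul]
      simp [smul_eq_mul]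
    have hev : ∀ i : Fin m, ∀ᶠ ε in nhdsWithin (0:ℝ) (Set.Ioi 0),
        (B.mulVec (y - ε • w')) i ≤ d i := by
      intro i
      by_cases hi : (B.mulVec y) i = d i
      · filter_upwards [self_mem_nhdsWithin] with ε hε
        rw [hlin, hi]
        have h4 := hact i hi
        have hε' : (0:ℝ) < ε := hε
        nlinarith
      · have hlt : (B.mulVec y) i < d i := lt_of_le_of_ne (hfeas i) hi
        have hcont : Filter.Tendsto
            (fun ε : ℝ => (B.mulVec y) i - ε * (B.mulVec w') i)
            (nhdsWithin 0 (Set.Ioi 0)) (nhds ((B.mulVec y) i)) := by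
          have hc : Continuous fun ε : ℝ => (B.mulVec y) i - ε * (B.mulVec w') i := by
            continuity
          have := hc.tendsto 0
          simp only [zero_mul, sub_zero] at this
          exact this.mono_left nhdsWithin_le_nhds
        filter_upwards [hcont.eventually (eventually_le_nhds hlt)] with ε hε
        rw [hlin]; exact hε
    obtain ⟨ε, hfeas', hε⟩ :=
      ((Filter.eventually_all.2 hev).and self_mem_nhdsWithin).exists
    have hle := hopt (y - ε • w') (fun i => hfeas' i)
    have hdot : c ⬝ᵥ (y - ε • w') = c ⬝ᵥ y - ε * (c ⬝ᵥ w') := by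
      simp [dotProduct_sub, dotProduct_smul, smul_eq_mul]
    rw [hdot] at hle
    have hε' : (0:ℝ) < ε := hε
    nlinarith
  obtain ⟨t, ht, hsum⟩ := hmem
  refine ⟨fun i => if (B.mulVec y) i = d i then t i else 0, ?_, ?_, ?_⟩
  · intro i; by_cases h : (B.mulVec y) i = d i <;> simp [h, ht i]
  · funext j
    have h5 := congrArg (fun x : EuclideanSpace ℝ (Fin q) => x j) hsum
    rw [euclid_sum_apply] at h5
    have h6 : (-c j : ℝ) = ∑ i, t i * v i j := h5
    show ∑ i, B.transpose j i * (if (B.mulVec y) i = d i then t i else 0) = -c j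
    rw [h6]
    apply Finset.sum_congr rfl
    intro i _
    rw [hvapp, Matrix.transpose_apply]
    by_cases h : (B.mulVec y) i = d i <;> simp [h, mul_comm]
  · intro i hi; simp [hi]

end BigMAux



open Matrix

/-- Feasibility for the optimistic linear bilevel problem (LBP): `A_l x ≤ b_l` and `y` is an
optimal solution of the lower-level LP `min c_fᵀ y  s.t. A_f x + B_f y ≤ b_f`. -/
def LBPFeasible {k p m q : ℕ}
    (Al : Matrix (Fin k) (Fin p) ℝ) (bl : Fin k → ℝ)
    (Af : Matrix (Fin m) (Fin p) ℝ) (Bf : Matrix (Fin m) (Fin q) ℝ)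
    (bf : Fin m → ℝ) (cf : Fin q → ℝ) (x : Fin p → ℝ) (y : Fin q → ℝ) : Prop :=
  Al.mulVec x ≤ bl ∧ Af.mulVec x + Bf.mulVec y ≤ bf ∧
    ∀ y' : Fin q → ℝ, Af.mulVec x + Bf.mulVec y' ≤ bf → cf ⬝ᵥ y ≤ cf ⬝ᵥ y'

/-- Feasibility for the Big-M reformulation with binary vector `z ∈ {0,1}^m`. -/
def BigMFeasible {k p m q : ℕ}
    (Al : Matrix (Fin k) (Fin p) ℝ) (bl : Fin k → ℝ)
    (Af : Matrix (Fin m) (Fin p) ℝ) (Bf : Matrix (Fin m) (Fin q) ℝ)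
    (bf : Fin m → ℝ) (cf : Fin q → ℝ) (M : ℝ)
    (x : Fin p → ℝ) (y : Fin q → ℝ) (μ : Fin m → ℝ) (z : Fin m → ℝ) : Prop :=
  (∀ i, z i = 0 ∨ z i = 1) ∧
  Al.mulVec x ≤ bl ∧
  Af.mulVec x + Bf.mulVec y ≤ bf ∧
  -(Bf.transpose.mulVec μ) = cf ∧
  0 ≤ μ ∧
  (∀ i, μ i ≤ M * (1 - z i)) ∧
  (∀ i, (bf - Af.mulVec x - Bf.mulVec y) i ≤ M * z i)

/-- Big-M reformulation, forward direction: if the joint feasible region `D` is compact, then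
there is `M > 0` such that every feasible point `(x,y)` of (LBP) lifts to a feasible point
`(x,y,μ,z)` of the Big-M problem, which is moreover optimal for the Big-M problem whenever
`(x,y)` is optimal for (LBP). -/
theorem bigM_forward {k p m q : ℕ}
    (Al : Matrix (Fin k) (Fin p) ℝ) (bl : Fin k → ℝ)
    (Af : Matrix (Fin m) (Fin p) ℝ) (Bf : Matrix (Fin m) (Fin q) ℝ)
    (bf : Fin m → ℝ) (cf : Fin q → ℝ) (cl : Fin p → ℝ) (dl : Fin q → ℝ)
    (hD : IsCompact {v : (Fin p → ℝ) × (Fin q → ℝ) |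
      Al.mulVec v.1 ≤ bl ∧ Af.mulVec v.1 + Bf.mulVec v.2 ≤ bf}) :
    ∃ M : ℝ, 0 < M ∧
      ∀ (x : Fin p → ℝ) (y : Fin q → ℝ),
        LBPFeasible Al bl Af Bf bf cf x y →
        ∃ (μ : Fin m → ℝ) (z : Fin m → ℝ),
          BigMFeasible Al bl Af Bf bf cf M x y μ z ∧
          ((∀ (x' : Fin p → ℝ) (y' : Fin q → ℝ), LBPFeasible Al bl Af Bf bf cf x' y' →
              cl ⬝ᵥ x + dl ⬝ᵥ y ≤ cl ⬝ᵥ x' + dl ⬝ᵥ y') →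
            ∀ (x' : Fin p → ℝ) (y' : Fin q → ℝ) (μ' : Fin m → ℝ) (z' : Fin m → ℝ),
              BigMFeasible Al bl Af Bf bf cf M x' y' μ' z' →
              cl ⬝ᵥ x + dl ⬝ᵥ y ≤ cl ⬝ᵥ x' + dl ⬝ᵥ y') := by
  classical
  -- bound on the slack over the compact set D
  obtain ⟨C, hC⟩ : ∃ C : ℝ, ∀ v : (Fin p → ℝ) × (Fin q → ℝ),
      (Al.mulVec v.1 ≤ bl ∧ Af.mulVec v.1 + Bf.mulVec v.2 ≤ bf) →
      ‖bf - Af.mulVec v.1 - Bf.mulVec v.2‖ ≤ C := by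
    have hcont : Continuous (fun v : (Fin p → ℝ) × (Fin q → ℝ) =>
        bf - Af.mulVec v.1 - Bf.mulVec v.2) := by
      apply continuous_pi
      intro i
      simp only [Pi.sub_apply, Matrix.mulVec, dotProduct]
      fun_prop
    obtain ⟨C, hC⟩ := hD.exists_bound_of_continuousOn hcont.continuousOn
    exact ⟨C, fun v hv => hC v hv⟩
  -- bound on chosen dual multipliers
  set P : Finset (Fin m) → Set (Fin m → ℝ) := fun S =>
    {μ | (∀ i, 0 ≤ μ i) ∧ (∀ i, i ∉ S → μ i = 0) ∧ Bf.transpose.mulVec μ = -cf} with hP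
  set g : Finset (Fin m) → ℝ := fun S => if h : (P S).Nonempty then ∑ i, h.choose i else 0
    with hgdef
  have hg0 : ∀ S, 0 ≤ g S := by
    intro S
    simp only [hgdef]
    split
    · next h => exact Finset.sum_nonneg fun i _ => h.choose_spec.1 i
    · exact le_rfl
  set M₁ : ℝ := ∑ S : Finset (Fin m), g S with hM₁def
  have hM₁ : ∀ (S : Finset (Fin m)) (h : (P S).Nonempty) (i : Fin m), h.choose i ≤ M₁ := by
    intro S h i
    have h1 : h.choose i ≤ ∑ j, h.choose j :=
      Finset.single_le_sum (fun j _ => h.choose_spec.1 j) (Finset.mem_univ i)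
    have h2 : (∑ j, h.choose j) = g S := by simp [hgdef, h]
    have h3 : g S ≤ M₁ :=
      Finset.single_le_sum (fun T _ => hg0 T) (Finset.mem_univ S)
    linarith
  set M : ℝ := max (max C M₁) 0 + 1 with hMdef
  have hMpos : 0 < M := by positivity
  have hCM : C ≤ M := le_trans (le_trans (le_max_left _ _) (le_max_left _ _)) (by linarith)
  have hM₁M : M₁ ≤ M := le_trans (le_trans (le_max_right _ _) (le_max_left _ _)) (by linarith)
  refine ⟨M, hMpos, ?_⟩
  intro x y hxy
  obtain ⟨hAl, hfeas, hopt⟩ := hxy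
  set d : Fin m → ℝ := bf - Af.mulVec x with hd
  have hfeas' : Bf.mulVec y ≤ d := by
    intro i
    have := hfeas i
    simp only [hd, Pi.sub_apply, Pi.add_apply] at this ⊢
    linarith
  have hopt' : ∀ y', Bf.mulVec y' ≤ d → cf ⬝ᵥ y ≤ cf ⬝ᵥ y' := by
    intro y' hy'
    refine hopt y' ?_
    intro i
    have := hy' i
    simp only [hd, Pi.sub_apply, Pi.add_apply] at this ⊢
    linarith
  obtain ⟨ν, hν0, hνeq, hνsupp⟩ := farkas_lp Bf d cf y hfeas' hopt'
  set S : Finset (Fin m) := {i | (Bf.mulVec y) i = d i} with hS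
  have hPS : (P S).Nonempty := by
    refine ⟨ν, hν0, fun i hi => hνsupp i ?_, hνeq⟩
    simpa [hS] using hi
  set μ : Fin m → ℝ := hPS.choose with hμdef
  obtain ⟨hμ0, hμsupp, hμeq⟩ := hPS.choose_spec
  set z : Fin m → ℝ := fun i => if (Bf.mulVec y) i = d i then 0 else 1 with hz
  have hslack : ∀ i, (bf - Af.mulVec x - Bf.mulVec y) i = d i - (Bf.mulVec y) i := by
    intro i; simp [hd]
  have hxyD : Al.mulVec x ≤ bl ∧ Af.mulVec x + Bf.mulVec y ≤ bf := ⟨hAl, hfeas⟩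
  have hslackM : ∀ i, (bf - Af.mulVec x - Bf.mulVec y) i ≤ M := by
    intro i
    have h1 := hC (x, y) hxyD
    have h2 : |(bf - Af.mulVec x - Bf.mulVec y) i| ≤ ‖bf - Af.mulVec x - Bf.mulVec y‖ := by
      simpa using norm_le_pi_norm (bf - Af.mulVec x - Bf.mulVec y) i
    have := abs_le.1 h2
    linarith
  refine ⟨μ, z, ⟨?_, hAl, hfeas, ?_, ?_, ?_, ?_⟩, ?_⟩
  · intro i
    by_cases h : (Bf.mulVec y) i = d i <;> simp [hz, h]
  · rw [hμeq]; simp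
  · intro i; exact hμ0 i
  · intro i
    by_cases h : (Bf.mulVec y) i = d i
    · have : z i = 0 := by simp [hz, h]
      rw [this]
      simpa using le_trans (hM₁ S hPS i) hM₁M
    · have hzi : z i = 1 := by simp [hz, h]
      have : μ i = 0 := hμsupp i (by simp [hS, h])
      rw [hzi, this]
      simp
  · intro i
    by_cases h : (Bf.mulVec y) i = d i
    · have : z i = 0 := by simp [hz, h]
      rw [this, hslack i, h]
      simp
    · have hzi : z i = 1 := by simp [hz, h]
      rw [hzi, mul_one]
      exact hslackM i
  · -- optimality transfer
    intro hoptL x' y' μ' z' hbig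
    obtain ⟨hz'bin, hAl', hfeas'', hdual, hμ'0, hμ'ub, hslack'⟩ := hbig
    have hcf : cf = -(Bf.transpose.mulVec μ') := by rw [← hdual]
    -- complementary slackness for (x', y', μ', z')
    have hcs : ∀ i, μ' i * ((bf - Af.mulVec x' - Bf.mulVec y') i) = 0 := by
      intro i
      rcases hz'bin i with h0 | h1
      · have h2 := hslack' i
        rw [h0, mul_zero] at h2
        have h3 : 0 ≤ (bf - Af.mulVec x' - Bf.mulVec y') i := by
          have := hfeas'' i
          simp only [Pi.sub_apply, Pi.add_apply] at this ⊢
          linarith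
        have : (bf - Af.mulVec x' - Bf.mulVec y') i = 0 := le_antisymm h2 h3
        rw [this, mul_zero]
      · have h2 := hμ'ub i
        rw [h1] at h2
        simp only [sub_self, mul_zero] at h2
        have : μ' i = 0 := le_antisymm h2 (hμ'0 i)
        rw [this, zero_mul]
    have hLBP' : LBPFeasible Al bl Af Bf bf cf x' y' := by
      refine ⟨hAl', hfeas'', ?_⟩
      intro y'' hy''
      have key : ∀ w : Fin q → ℝ, (Bf.transpose.mulVec μ') ⬝ᵥ w = μ' ⬝ᵥ (Bf.mulVec w) := by
        intro w
        rw [Matrix.mulVec_transpose, ← Matrix.dotProduct_mulVec]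
      have h1 : μ' ⬝ᵥ (Bf.mulVec y'') ≤ μ' ⬝ᵥ (bf - Af.mulVec x') := by
        apply Finset.sum_le_sum
        intro i _
        have hμi : (0:ℝ) ≤ μ' i := hμ'0 i
        have h5 := hy'' i
        simp only [Pi.sub_apply, Pi.add_apply] at h5 ⊢
        exact mul_le_mul_of_nonneg_left (by linarith) hμi
      have h2 : μ' ⬝ᵥ (Bf.mulVec y') = μ' ⬝ᵥ (bf - Af.mulVec x') := by
        apply Finset.sum_congr rfl
        intro i _
        have := hcs i
        simp only [Pi.sub_apply] at this ⊢
        nlinarith [hcs i]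
      have h3 : cf ⬝ᵥ y'' = -(μ' ⬝ᵥ (Bf.mulVec y'')) := by
        rw [hcf]
        rw [show (-(Bf.transpose.mulVec μ')) ⬝ᵥ y'' = -((Bf.transpose.mulVec μ') ⬝ᵥ y'') by
          simp [neg_dotProduct]]
        rw [key]
      have h4 : cf ⬝ᵥ y' = -(μ' ⬝ᵥ (Bf.mulVec y')) := by
        rw [hcf]
        rw [show (-(Bf.transpose.mulVec μ')) ⬝ᵥ y' = -((Bf.transpose.mulVec μ') ⬝ᵥ y') by
          simp [neg_dotProduct]]
        rw [key]
      rw [h3, h4, h2]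
      linarith
    exact hoptL x' y' hLBP'
end

section
/- (Big-M reformulation, backward direction.) Let A_l, b_l, A_f, B_f, b_f, c_f be as in the linear bilevel problem (LBP), suppose D = {(x,y) : A_l x ≤ b_l, A_f x + B_f y ≤ b_f} is compact, and let M > 0 be arbitrary. If (x,y,μ,z) with z ∈ {0,1}^m satisfies A_l x ≤ b_l, A_f x + B_f y ≤ b_f, −B_fᵀ μ = c_f, μ ≥ 0, μ ≤ M(1−z) componentwise, and b_f − A_f x − B_f y ≤ M z componentwise, then μ_i (A_f x + B_f y − b_f)_i = 0 for all i ∈ [m], and consequently (x,y) is a feasible point of (LBP): y minimizes c_fᵀ y over {y : A_f x + B_f y ≤ b_f}. -/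
open Matrix

/-- Big-M reformulation, backward direction: if `D` is compact, `M > 0`, and `(x,y,μ,z)` with
binary `z` is feasible for the Big-M problem, then complementary slackness holds and `(x,y)`
is a feasible point of (LBP). -/
theorem bigM_backward {k p m q : ℕ}
    (Al : Matrix (Fin k) (Fin p) ℝ) (bl : Fin k → ℝ)
    (Af : Matrix (Fin m) (Fin p) ℝ) (Bf : Matrix (Fin m) (Fin q) ℝ)
    (bf : Fin m → ℝ) (cf : Fin q → ℝ)
    (hD : IsCompact {v : (Fin p → ℝ) × (Fin q → ℝ) |
      Al.mulVec v.1 ≤ bl ∧ Af.mulVec v.1 + Bf.mulVec v.2 ≤ bf})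
    (M : ℝ) (hM : 0 < M)
    (x : Fin p → ℝ) (y : Fin q → ℝ) (μ : Fin m → ℝ) (z : Fin m → ℝ)
    (hfeas : BigMFeasible Al bl Af Bf bf cf M x y μ z) :
    (∀ i, μ i * (Af.mulVec x + Bf.mulVec y - bf) i = 0) ∧
    LBPFeasible Al bl Af Bf bf cf x y := by
  obtain ⟨hz, hAl, hF, hcf, hμ0, hμM, hslack⟩ := hfeas
  have hcs : ∀ i, μ i * (Af.mulVec x + Bf.mulVec y - bf) i = 0 := by
    intro i
    rcases hz i with h0 | h1
    · have h1 : (bf - Af.mulVec x - Bf.mulVec y) i ≤ 0 := by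
        have := hslack i; rw [h0] at this; linarith
      have h2 : (Af.mulVec x + Bf.mulVec y) i ≤ bf i := hF i
      have : (Af.mulVec x + Bf.mulVec y - bf) i = 0 := by
        simp only [Pi.sub_apply, Pi.add_apply] at h1 h2 ⊢; linarith
      rw [this, mul_zero]
    · have h1 : μ i ≤ 0 := by have := hμM i; rw [h1] at this; linarith
      have : μ i = 0 := le_antisymm h1 (hμ0 i)
      rw [this, zero_mul]
  refine ⟨hcs, hAl, hF, ?_⟩
  intro y' hy'
  rw [← hcf]
  have hT : ∀ v : Fin q → ℝ, -(Bf.transpose.mulVec μ) ⬝ᵥ v = -(μ ⬝ᵥ Bf.mulVec v) := by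
    intro v
    rw [neg_dotProduct, Matrix.mulVec_transpose, ← Matrix.dotProduct_mulVec]
  rw [hT, hT, neg_le_neg_iff]
  have hsum : μ ⬝ᵥ (Af.mulVec x + Bf.mulVec y - bf) = 0 := by
    simp only [dotProduct]
    exact Finset.sum_eq_zero fun i _ => hcs i
  have hy : μ ⬝ᵥ Bf.mulVec y = μ ⬝ᵥ (bf - Af.mulVec x) := by
    have := hsum
    simp only [dotProduct, Pi.sub_apply, Pi.add_apply] at this ⊢
    have expand : ∀ i ∈ Finset.univ, μ i * ((Af.mulVec x) i + (Bf.mulVec y) i - bf i)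
        = μ i * (Bf.mulVec y) i - μ i * (bf i - (Af.mulVec x) i) := by
      intro i _; ring
    rw [Finset.sum_congr rfl expand, Finset.sum_sub_distrib, sub_eq_zero] at this
    exact this
  rw [hy]
  have : ∀ i ∈ Finset.univ, μ i * (Bf.mulVec y') i ≤ μ i * (bf i - (Af.mulVec x) i) := by
    intro i _
    have h2 : (Af.mulVec x) i + (Bf.mulVec y') i ≤ bf i := hy' i
    exact mul_le_mul_of_nonneg_left (by linarith) (hμ0 i)
  simpa [dotProduct] using Finset.sum_le_sum this
end

section
/- (Knapsack rounding lemma.) Let n ≥ 1, let a_1, …, a_n ∈ ℕ be positive with β = max_i a_i ≥ 2, let δ ∈ ℕ, and let M > β². Define f(x) = Σ_{i=1}^n a_i x_i and g(x) = Σ_{i=1}^n min(x_i, 1 − x_i) for x ∈ ℝ^n. If x ∈ [0,1]^n satisfies Σ_{i=1}^n a_i x_i ≤ δ and x ∉ {0,1}^n, then there exists z ∈ {0,1}^n with Σ_{i=1}^n a_i z_i ≤ δ and f(x) − M·g(x) < f(z). -/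
open Finset

/-- Knapsack rounding lemma: if `β = maxᵢ aᵢ ≥ 2` and `M > β²`, then any fractional feasible
point `x ∈ [0,1]^n` of the knapsack relaxation is strictly beaten (for the penalized objective
`f(x) − M·g(x)` with `g(x) = Σᵢ min(xᵢ, 1 − xᵢ)`) by some integer feasible point `z`. -/
theorem knapsack_rounding (n : ℕ) (hn : 1 ≤ n) (a : Fin n → ℕ) (ha : ∀ i, 0 < a i)
    (β : ℕ) (hβ : IsGreatest (Set.range fun i => a i) β) (hβ2 : 2 ≤ β)
    (δ : ℕ) (M : ℝ) (hM : (β : ℝ) ^ 2 < M)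
    (x : Fin n → ℝ) (hx : ∀ i, x i ∈ Set.Icc (0 : ℝ) 1)
    (hxfeas : ∑ i, (a i : ℝ) * x i ≤ (δ : ℝ))
    (hxfrac : ¬ ∀ i, x i = 0 ∨ x i = 1) :
    ∃ z : Fin n → ℝ, (∀ i, z i = 0 ∨ z i = 1) ∧ (∑ i, (a i : ℝ) * z i ≤ (δ : ℝ)) ∧
      (∑ i, (a i : ℝ) * x i) - M * (∑ i, min (x i) (1 - x i)) < ∑ i, (a i : ℝ) * z i := by
  classical
  have haβ : ∀ i, a i ≤ β := fun i => hβ.2 ⟨i, rfl⟩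
  have haβ' : ∀ i, (a i : ℝ) ≤ (β : ℝ) := fun i => by exact_mod_cast haβ i
  have hβ0 : (0:ℝ) ≤ (β:ℝ) := by positivity
  have hβ2' : (2:ℝ) ≤ (β:ℝ) := by exact_mod_cast hβ2
  push_neg at hxfrac
  obtain ⟨i₀, hi₀0, hi₀1⟩ := hxfrac
  have hx0 : ∀ i, 0 ≤ x i := fun i => (hx i).1
  have hx1 : ∀ i, x i ≤ 1 := fun i => (hx i).2
  have hm0 : ∀ i, 0 ≤ min (x i) (1 - x i) := fun i => le_min (hx0 i) (by linarith [hx1 i])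
  have hgpos : 0 < ∑ i, min (x i) (1 - x i) := by
    apply Finset.sum_pos' (fun i _ => hm0 i)
    refine ⟨i₀, mem_univ _, lt_min (lt_of_le_of_ne (hx0 i₀) (Ne.symm hi₀0)) ?_⟩
    have := lt_of_le_of_ne (hx1 i₀) hi₀1
    linarith
  set O : Finset (Fin n) := univ.filter (fun i => x i = 1) with hO
  set H : Finset (Fin n) := univ.filter (fun i => 1/2 < x i ∧ x i < 1) with hH
  have hOx : ∀ i ∈ O, x i = 1 := fun i hi => (mem_filter.mp hi).2
  have hHx : ∀ i ∈ H, 1/2 < x i ∧ x i < 1 := fun i hi => (mem_filter.mp hi).2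
  -- feasibility of the all-down rounding
  have hOfeas : ∑ i ∈ O, a i ≤ δ := by
    have h1 : ∑ i ∈ O, (a i : ℝ) ≤ ∑ i, (a i : ℝ) * x i := by
      calc ∑ i ∈ O, (a i : ℝ) = ∑ i ∈ O, (a i : ℝ) * x i := by
            refine Finset.sum_congr rfl fun i hi => ?_
            rw [hOx i hi, mul_one]
        _ ≤ ∑ i, (a i : ℝ) * x i :=
            Finset.sum_le_sum_of_subset_of_nonneg (subset_univ _)
              (fun i _ _ => mul_nonneg (Nat.cast_nonneg _) (hx0 i))
    have : (↑(∑ i ∈ O, a i) : ℝ) ≤ (δ : ℝ) := by push_cast; linarith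
    exact_mod_cast this
  have hne : (H.powerset.filter (fun S => ∑ i ∈ O ∪ S, a i ≤ δ)).Nonempty := by
    refine ⟨∅, mem_filter.mpr ⟨mem_powerset.mpr (empty_subset _), ?_⟩⟩
    simpa using hOfeas
  obtain ⟨S, hSmem, hSmax⟩ :=
    Finset.exists_max_image _ (fun S => ∑ i ∈ S, a i) hne
  obtain ⟨hSsub, hSfeas⟩ := mem_filter.mp hSmem
  have hSsub' : S ⊆ H := mem_powerset.mp hSsub
  have hfz : ∑ i, (a i : ℝ) * (if i ∈ O ∪ S then (1:ℝ) else 0) = ∑ i ∈ O ∪ S, (a i : ℝ) := by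
    simp only [mul_ite, mul_one, mul_zero]
    rw [Finset.sum_ite_mem, univ_inter]
  refine ⟨fun i => if i ∈ O ∪ S then (1:ℝ) else 0,
    fun i => by by_cases h : i ∈ O ∪ S <;> simp [h], ?_, ?_⟩
  · rw [hfz]
    have : ((∑ i ∈ O ∪ S, a i : ℕ) : ℝ) ≤ (δ : ℝ) := by exact_mod_cast hSfeas
    push_cast at this
    linarith
  · rw [hfz]
    by_cases hSH : S = H
    · -- all high coordinates rounded up
      have key : ∑ i, (a i : ℝ) * x i - ∑ i ∈ O ∪ S, (a i : ℝ)
          ≤ (β:ℝ) * ∑ i, min (x i) (1 - x i) := by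
      -- compare termwise with β * min
        rw [← hfz, Finset.mul_sum, ← Finset.sum_sub_distrib]
        refine Finset.sum_le_sum fun i _ => ?_
        by_cases hi : i ∈ O ∪ S
        · simp only [hi, if_true, mul_one]
          have h1 := mul_nonneg hβ0 (hm0 i)
          have h2 : (a i : ℝ) * x i ≤ (a i : ℝ) := by
            nlinarith [hx1 i, Nat.cast_nonneg (α := ℝ) (a i)]
          linarith
        · simp only [hi, if_false, mul_zero, sub_zero]
          have hiO : x i ≠ 1 := by
            intro h; exact hi (mem_union_left _ (mem_filter.mpr ⟨mem_univ _, h⟩))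
          have hiH : ¬ (1/2 < x i ∧ x i < 1) := by
            intro h; exact hi (mem_union_right _ (hSH ▸ mem_filter.mpr ⟨mem_univ _, h⟩))
          have hxi : x i ≤ 1/2 := by
            by_contra h
            exact hiH ⟨by linarith, lt_of_le_of_ne (hx1 i) hiO⟩
          have hmin : min (x i) (1 - x i) = x i := min_eq_left (by linarith)
          rw [hmin]
          exact mul_le_mul_of_nonneg_right (haβ' i) (hx0 i)
      have hMβ : (β:ℝ) < M := by nlinarith
      nlinarith [mul_pos (sub_pos.mpr hMβ) hgpos]
    · -- some high coordinate j could not be rounded up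
      obtain ⟨j, hjH, hjS⟩ := Finset.exists_of_ssubset (hSsub'.ssubset_of_ne hSH)
      have hjO : j ∉ O := by
        intro h
        exact absurd (hOx j h) (ne_of_lt (hHx j hjH).2)
      have hjOS : j ∉ O ∪ S := by
        simp [hjO, hjS]
      have hinfeas : ¬ (∑ i ∈ O ∪ insert j S, a i ≤ δ) := by
        intro h
        have hmem : insert j S ∈ H.powerset.filter (fun S => ∑ i ∈ O ∪ S, a i ≤ δ) :=
          mem_filter.mpr ⟨mem_powerset.mpr (insert_subset hjH hSsub'), h⟩
        have := hSmax _ hmem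
        rw [Finset.sum_insert hjS] at this
        have := ha j
        omega
      have hltn : δ + 1 ≤ a j + ∑ i ∈ O ∪ S, a i := by
        rw [Finset.union_insert, Finset.sum_insert hjOS] at hinfeas
        omega
      have hlt : (δ : ℝ) + 1 ≤ (a j : ℝ) + ∑ i ∈ O ∪ S, (a i : ℝ) := by
        have : ((δ + 1 : ℕ) : ℝ) ≤ ((a j + ∑ i ∈ O ∪ S, a i : ℕ) : ℝ) := by exact_mod_cast hltn
        push_cast at this
        linarith
      -- bound the objective gap
      have fb : ∑ i, (a i : ℝ) * x i - ∑ i ∈ O ∪ S, (a i : ℝ) ≤ (β:ℝ) - 1 := by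
        have := haβ' j
        linarith
      -- lower bound on g : 1 ≤ β * g
      set T : Finset (Fin n) := insert j (O ∪ S) with hT
      have hsumT : ∑ i ∈ T, (a i : ℝ) = (a j : ℝ) + ∑ i ∈ O ∪ S, (a i : ℝ) :=
        Finset.sum_insert hjOS
      have hTx : ∑ i ∈ T, (a i : ℝ) * x i ≤ ∑ i, (a i : ℝ) * x i :=
        Finset.sum_le_sum_of_subset_of_nonneg (subset_univ _)
          (fun i _ _ => mul_nonneg (Nat.cast_nonneg _) (hx0 i))
      have hterm : ∀ i ∈ T, (a i : ℝ) - (a i : ℝ) * x i ≤ (β:ℝ) * min (x i) (1 - x i) := by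
        intro i hi
        rcases Finset.mem_insert.mp hi with h | h
        · subst h
          have h1 := (hHx i hjH).1
          have h2 := (hHx i hjH).2
          have hmin : min (x i) (1 - x i) = 1 - x i := min_eq_right (by linarith)
          rw [hmin]
          have : (a i : ℝ) - (a i : ℝ) * x i = (a i : ℝ) * (1 - x i) := by ring
          rw [this]
          exact mul_le_mul_of_nonneg_right (haβ' i) (by linarith)
        · rcases Finset.mem_union.mp h with h | h
          · have hxi : x i = 1 := hOx i h
            rw [hxi]
            simp
          · have hiH := hHx i (hSsub' h)
            have hmin : min (x i) (1 - x i) = 1 - x i := min_eq_right (by linarith [hiH.1])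
            rw [hmin]
            have : (a i : ℝ) - (a i : ℝ) * x i = (a i : ℝ) * (1 - x i) := by ring
            rw [this]
            exact mul_le_mul_of_nonneg_right (haβ' i) (by linarith [hiH.2])
      have hg : 1 ≤ (β:ℝ) * ∑ i, min (x i) (1 - x i) := by
        have h1 : ∑ i ∈ T, ((a i : ℝ) - (a i : ℝ) * x i)
            ≤ ∑ i ∈ T, (β:ℝ) * min (x i) (1 - x i) := Finset.sum_le_sum hterm
        have h2 : ∑ i ∈ T, (β:ℝ) * min (x i) (1 - x i)
            ≤ (β:ℝ) * ∑ i, min (x i) (1 - x i) := by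
          rw [← Finset.mul_sum]
          exact mul_le_mul_of_nonneg_left
            (Finset.sum_le_sum_of_subset_of_nonneg (subset_univ _) (fun i _ _ => hm0 i)) hβ0
        rw [Finset.sum_sub_distrib, hsumT] at h1
        linarith
      nlinarith [hgpos, hM, hβ2', mul_pos (sub_pos.mpr hM) hgpos,
        mul_nonneg hβ0 (le_of_lt hgpos)]
end

section
/- (Integrality of optimal solutions of the penalized knapsack relaxation.) Let n ≥ 1, let a_1, …, a_n ∈ ℕ be positive with β = max_i a_i ≥ 2, let δ ∈ ℕ, and let M = β² + 1. If x* maximizes the function x ↦ Σ_{i=1}^n a_i x_i − M Σ_{i=1}^n min(x_i, 1 − x_i) over the set {x ∈ [0,1]^n : Σ_{i=1}^n a_i x_i ≤ δ}, then x* ∈ {0,1}^n and x* maximizes Σ_{i=1}^n a_i x_i over {x ∈ {0,1}^n : Σ_{i=1}^n a_i x_i ≤ δ}. -/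
open Finset

/-- With penalty `M = β² + 1`, every maximizer of the penalized knapsack relaxation over
`{x ∈ [0,1]^n : Σ aᵢ xᵢ ≤ δ}` is integer and solves the 0/1 knapsack problem. -/
theorem penalized_knapsack_integrality (n : ℕ) (hn : 1 ≤ n)
    (a : Fin n → ℕ) (ha : ∀ i, 0 < a i)
    (β : ℕ) (hβ : IsGreatest (Set.range fun i => a i) β) (hβ2 : 2 ≤ β)
    (δ : ℕ) (xstar : Fin n → ℝ)
    (hfeas : (∀ i, xstar i ∈ Set.Icc (0 : ℝ) 1) ∧ ∑ i, (a i : ℝ) * xstar i ≤ (δ : ℝ))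
    (hopt : ∀ x : Fin n → ℝ, (∀ i, x i ∈ Set.Icc (0 : ℝ) 1) →
      ∑ i, (a i : ℝ) * x i ≤ (δ : ℝ) →
      (∑ i, (a i : ℝ) * x i) - ((β : ℝ) ^ 2 + 1) * (∑ i, min (x i) (1 - x i)) ≤
        (∑ i, (a i : ℝ) * xstar i)
          - ((β : ℝ) ^ 2 + 1) * (∑ i, min (xstar i) (1 - xstar i))) :
    (∀ i, xstar i = 0 ∨ xstar i = 1) ∧
    ∀ x : Fin n → ℝ, (∀ i, x i = 0 ∨ x i = 1) → ∑ i, (a i : ℝ) * x i ≤ (δ : ℝ) →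
      ∑ i, (a i : ℝ) * x i ≤ ∑ i, (a i : ℝ) * xstar i := by
  classical
  obtain ⟨hbox, hbud⟩ := hfeas
  have haβ : ∀ i, (a i : ℝ) ≤ β := fun i => by exact_mod_cast hβ.2 ⟨i, rfl⟩
  have hβ2R : (2:ℝ) ≤ β := by exact_mod_cast hβ2
  -- Part 2
  have part2 : ∀ x : Fin n → ℝ, (∀ i, x i = 0 ∨ x i = 1) →
      ∑ i, (a i : ℝ) * x i ≤ (δ : ℝ) →
      ∑ i, (a i : ℝ) * x i ≤ ∑ i, (a i : ℝ) * xstar i := by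
    intro x hx hxb
    have hxbox : ∀ i, x i ∈ Set.Icc (0:ℝ) 1 := fun i => by
      rcases hx i with h | h <;> simp [h]
    have hpen0 : ∑ i, min (x i) (1 - x i) = 0 := by
      apply Finset.sum_eq_zero; intro i _; rcases hx i with h | h <;> simp [h]
    have hpenpos : 0 ≤ ∑ i, min (xstar i) (1 - xstar i) := by
      apply Finset.sum_nonneg; intro i _
      exact le_min (hbox i).1 (by linarith [(hbox i).2])
    have h := hopt x hxbox hxb
    rw [hpen0] at h
    have hM0 : (0:ℝ) ≤ ((β:ℝ)^2 + 1) := by positivity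
    nlinarith [mul_nonneg hM0 hpenpos]
  refine ⟨?_, part2⟩
  -- Step 1: each coordinate is 0 or > 1/2
  have step1 : ∀ i, xstar i = 0 ∨ 1/2 < xstar i := by
    intro i
    by_contra hcon
    push_neg at hcon
    obtain ⟨h0, h2⟩ := hcon
    have hipos : 0 < xstar i := lt_of_le_of_ne (hbox i).1 (Ne.symm h0)
    set x' := Function.update xstar i 0 with hx'
    have hbox' : ∀ j, x' j ∈ Set.Icc (0:ℝ) 1 := by
      intro j
      by_cases hj : j = i
      · subst hj
        simp only [x', Function.update_self, Set.mem_Icc]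
        norm_num
      · simpa [x', Function.update_of_ne hj] using hbox j
    have hsum' : ∑ j, (a j:ℝ) * x' j = ∑ j, (a j:ℝ) * xstar j - (a i:ℝ) * xstar i := by
      have e : ∀ j, (a j:ℝ) * x' j
          = Function.update (fun j => (a j:ℝ) * xstar j) i 0 j := by
        intro j; by_cases hj : j = i
        · subst hj; simp [x']
        · simp [x', Function.update_of_ne hj]
      rw [Finset.sum_congr rfl (fun j _ => e j),
        Finset.sum_update_of_mem (mem_univ i) _ 0]
      have h2' := Finset.sum_eq_sum_sdiff_singleton_add (mem_univ i)
        (fun j => (a j:ℝ) * xstar j)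
      linarith
    have hpen' : ∑ j, min (x' j) (1 - x' j)
        = ∑ j, min (xstar j) (1 - xstar j) - xstar i := by
      have e : ∀ j, min (x' j) (1 - x' j)
          = Function.update (fun j => min (xstar j) (1 - xstar j)) i 0 j := by
        intro j; by_cases hj : j = i
        · subst hj; simp [x']
        · simp [x', Function.update_of_ne hj]
      rw [Finset.sum_congr rfl (fun j _ => e j),
        Finset.sum_update_of_mem (mem_univ i) _ 0]
      have h2' := Finset.sum_eq_sum_sdiff_singleton_add (mem_univ i)
        (fun j => min (xstar j) (1 - xstar j))
      have hmin : min (xstar i) (1 - xstar i) = xstar i := min_eq_left (by linarith)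
      rw [hmin] at h2'
      linarith
    have hbud' : ∑ j, (a j:ℝ) * x' j ≤ (δ:ℝ) := by
      rw [hsum']
      have : 0 ≤ (a i:ℝ) * xstar i := mul_nonneg (by positivity) hipos.le
      linarith
    have h := hopt x' hbox' hbud'
    rw [hsum', hpen'] at h
    have hMx : ((β:ℝ)^2+1) * xstar i ≤ (a i:ℝ) * xstar i := by nlinarith [h]
    have haxi : (a i:ℝ) * xstar i ≤ (β:ℝ) * xstar i :=
      mul_le_mul_of_nonneg_right (haβ i) hipos.le
    have hfin : ((β:ℝ)^2+1) ≤ (β:ℝ) :=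
      le_of_mul_le_mul_right (le_trans hMx haxi) hipos
    nlinarith [hβ2R]
  -- Step 2: no coordinate strictly between 1/2 and 1
  by_contra hcon
  push_neg at hcon
  obtain ⟨i₀, hi₀0, hi₀1⟩ := hcon
  set F : Finset (Fin n) := univ.filter (fun i => 1/2 < xstar i ∧ xstar i < 1) with hF
  set O : Finset (Fin n) := univ.filter (fun i => xstar i = 1) with hO
  have memF : ∀ i, i ∈ F ↔ 1/2 < xstar i ∧ xstar i < 1 := fun i => by
    rw [hF]; simp only [Finset.mem_filter, Finset.mem_univ, true_and]
  have memO : ∀ i, i ∈ O ↔ xstar i = 1 := fun i => by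
    rw [hO]; simp only [Finset.mem_filter, Finset.mem_univ, true_and]
  have hi₀F : i₀ ∈ F := by
    rcases step1 i₀ with h | h
    · exact absurd h hi₀0
    · exact (memF i₀).2 ⟨h, lt_of_le_of_ne (hbox i₀).2 hi₀1⟩
  have hFO : ∀ i ∈ F, i ∉ O := by
    intro i hi hc
    rw [memO] at hc
    have := ((memF i).1 hi).2
    rw [hc] at this
    exact lt_irrefl _ this
  have hdisj : Disjoint O F := by
    rw [Finset.disjoint_right]; exact hFO
  -- termwise decompositions
  have hterm_sum : ∀ i, (a i:ℝ) * xstar i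
      = (if i ∈ O then (a i:ℝ) else 0) + (if i ∈ F then (a i:ℝ) * xstar i else 0) := by
    intro i
    rcases step1 i with h | h
    · have hiO : i ∉ O := by rw [memO, h]; norm_num
      have hiF : i ∉ F := by rw [memF, h]; rintro ⟨hc, -⟩; linarith
      simp [hiO, hiF, h]
    · rcases eq_or_lt_of_le (hbox i).2 with h1 | h1
      · have hiO : i ∈ O := (memO i).2 h1
        have hiF : i ∉ F := by rw [memF, h1]; rintro ⟨-, hc⟩; exact lt_irrefl _ hc
        simp [hiO, hiF, h1]
      · have hiF : i ∈ F := (memF i).2 ⟨h, h1⟩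
        have hiO : i ∉ O := by rw [memO]; intro hc; rw [hc] at h1; exact lt_irrefl _ h1
        simp [hiO, hiF]
  have hterm_pen : ∀ i, min (xstar i) (1 - xstar i)
      = (if i ∈ F then 1 - xstar i else 0) := by
    intro i
    rcases step1 i with h | h
    · have hiF : i ∉ F := by rw [memF, h]; rintro ⟨hc, -⟩; linarith
      simp [hiF, h]
    · rcases eq_or_lt_of_le (hbox i).2 with h1 | h1
      · have hiF : i ∉ F := by rw [memF, h1]; rintro ⟨-, hc⟩; exact lt_irrefl _ hc
        simp [hiF, h1]
      · have hiF : i ∈ F := (memF i).2 ⟨h, h1⟩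
        simp [hiF, min_eq_right (by linarith : 1 - xstar i ≤ xstar i)]
  have hsum : ∑ i, (a i:ℝ) * xstar i
      = ∑ i ∈ O, (a i:ℝ) + ∑ i ∈ F, (a i:ℝ) * xstar i := by
    rw [Finset.sum_congr rfl (fun i _ => hterm_sum i), Finset.sum_add_distrib,
      Finset.sum_ite_mem, Finset.sum_ite_mem, Finset.univ_inter, Finset.univ_inter]
  have hpen : ∑ i, min (xstar i) (1 - xstar i) = ∑ i ∈ F, (1 - xstar i) := by
    rw [Finset.sum_congr rfl (fun i _ => hterm_pen i),
      Finset.sum_ite_mem, Finset.univ_inter]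
  -- indicator vectors
  have hindbox : ∀ T : Finset (Fin n), ∀ j,
      (if j ∈ T then (1:ℝ) else 0) ∈ Set.Icc (0:ℝ) 1 := by
    intro T j
    by_cases h : j ∈ T <;> simp [h]
  have hindsum : ∀ T : Finset (Fin n),
      ∑ j, (a j:ℝ) * (if j ∈ T then (1:ℝ) else 0) = ∑ j ∈ T, (a j:ℝ) := by
    intro T
    have e : ∀ j, (a j:ℝ) * (if j ∈ T then (1:ℝ) else 0)
        = if j ∈ T then (a j:ℝ) else 0 := by
      intro j; by_cases h : j ∈ T <;> simp [h]
    rw [Finset.sum_congr rfl (fun j _ => e j), Finset.sum_ite_mem, Finset.univ_inter]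
  have hindpen : ∀ T : Finset (Fin n),
      ∑ j, min (if j ∈ T then (1:ℝ) else 0) (1 - (if j ∈ T then (1:ℝ) else 0)) = 0 := by
    intro T
    apply Finset.sum_eq_zero; intro j _; by_cases h : j ∈ T <;> simp [h]
  have hWnn : 0 ≤ ∑ i ∈ F, (a i:ℝ) * xstar i :=
    Finset.sum_nonneg fun i _ => mul_nonneg (by positivity) (hbox i).1
  have hWub : ∑ i ∈ O, (a i:ℝ) + ∑ i ∈ F, (a i:ℝ) * xstar i ≤ (δ:ℝ) := by
    rw [← hsum]; exact hbud
  rcases le_or_gt (∑ i ∈ O, a i + ∑ i ∈ F, a i) δ with hcase | hcase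
  · -- Case A: round all of F up
    set x' : Fin n → ℝ := fun j => if j ∈ O ∪ F then (1:ℝ) else 0 with hx'
    have hbud' : ∑ j, (a j:ℝ) * x' j ≤ (δ:ℝ) := by
      rw [hindsum (O ∪ F), Finset.sum_union hdisj]
      have hc : ((∑ i ∈ O, a i : ℕ) : ℝ) + ((∑ i ∈ F, a i : ℕ) : ℝ) ≤ (δ:ℝ) := by
        exact_mod_cast hcase
      push_cast at hc
      linarith
    have h := hopt x' (hindbox _) hbud'
    rw [hindsum (O ∪ F), hindpen (O ∪ F), Finset.sum_union hdisj, hsum, hpen] at h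
    have hFub : ∑ i ∈ F, (a i:ℝ) * xstar i ≤ ∑ i ∈ F, (a i:ℝ) := by
      apply Finset.sum_le_sum; intro i _
      exact mul_le_of_le_one_right (by positivity) (hbox i).2
    have hPpos : 0 < ∑ i ∈ F, (1 - xstar i) := by
      apply Finset.sum_pos
      · intro i hi
        have := ((memF i).1 hi).2
        linarith
      · exact ⟨i₀, hi₀F⟩
    have hMPpos : 0 < ((β:ℝ)^2 + 1) * ∑ i ∈ F, (1 - xstar i) :=
      mul_pos (by positivity) hPpos
    linarith
  · -- Case B
    have hOle : ∑ i ∈ O, a i ≤ δ := by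
      have h1 : ((∑ i ∈ O, a i : ℕ) : ℝ) ≤ (δ:ℝ) := by push_cast; linarith
      exact_mod_cast h1
    set 𝒮 : Finset (Finset (Fin n)) :=
      F.powerset.filter (fun S => ∑ i ∈ O, a i + ∑ i ∈ S, a i ≤ δ) with h𝒮
    have hne : 𝒮.Nonempty := ⟨∅, by simp [h𝒮, hOle]⟩
    obtain ⟨S, hS𝒮, hSmax⟩ := Finset.exists_max_image 𝒮 Finset.card hne
    have hSF : S ⊆ F := Finset.mem_powerset.1 (Finset.mem_filter.1 hS𝒮).1
    have hSfeas : ∑ i ∈ O, a i + ∑ i ∈ S, a i ≤ δ := (Finset.mem_filter.1 hS𝒮).2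
    have hSneF : S ≠ F := by
      intro h; rw [h] at hSfeas; omega
    obtain ⟨j, hjF, hjS⟩ := Finset.exists_of_ssubset (hSF.ssubset_of_ne hSneF)
    have hins : δ < ∑ i ∈ O, a i + (a j + ∑ i ∈ S, a i) := by
      by_contra hc
      push_neg at hc
      have hmem : insert j S ∈ 𝒮 := by
        refine Finset.mem_filter.2 ⟨Finset.mem_powerset.2 ?_, ?_⟩
        · exact Finset.insert_subset hjF hSF
        · rwa [Finset.sum_insert hjS]
      have := hSmax _ hmem
      rw [Finset.card_insert_of_notMem hjS] at this
      omega
    -- real versions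
    have hcaseR : (δ:ℝ) + 1 ≤ ∑ i ∈ O, (a i:ℝ) + ∑ i ∈ F, (a i:ℝ) := by
      have hc : ((δ:ℕ):ℝ) + 1 ≤ ((∑ i ∈ O, a i + ∑ i ∈ F, a i : ℕ) : ℝ) := by
        exact_mod_cast Nat.succ_le_of_lt hcase
      push_cast at hc; linarith
    have hinsR : (δ:ℝ) + 1 ≤ ∑ i ∈ O, (a i:ℝ) + ((a j:ℝ) + ∑ i ∈ S, (a i:ℝ)) := by
      have hc : ((δ:ℕ):ℝ) + 1 ≤ ((∑ i ∈ O, a i + (a j + ∑ i ∈ S, a i) : ℕ) : ℝ) := by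
        exact_mod_cast Nat.succ_le_of_lt hins
      push_cast at hc; linarith
    have hPE : ∑ i ∈ F, (a i:ℝ) - ∑ i ∈ F, (a i:ℝ) * xstar i
        ≤ (β:ℝ) * ∑ i ∈ F, (1 - xstar i) := by
      rw [Finset.mul_sum, ← Finset.sum_sub_distrib]
      apply Finset.sum_le_sum
      intro i hi
      have hx1 : xstar i ≤ 1 := (hbox i).2
      nlinarith [haβ i, (hbox i).1]
    have hP1 : 1 ≤ (β:ℝ) * ∑ i ∈ F, (1 - xstar i) := by linarith
    -- optimality against indicator of O ∪ S
    set x' : Fin n → ℝ := fun j => if j ∈ O ∪ S then (1:ℝ) else 0 with hx'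
    have hdisjOS : Disjoint O S := hdisj.mono_right hSF
    have hbud' : ∑ j, (a j:ℝ) * x' j ≤ (δ:ℝ) := by
      rw [hindsum (O ∪ S), Finset.sum_union hdisjOS]
      have hc : ((∑ i ∈ O, a i + ∑ i ∈ S, a i : ℕ) : ℝ) ≤ (δ:ℝ) := by
        exact_mod_cast hSfeas
      push_cast at hc; linarith
    have h := hopt x' (hindbox _) hbud'
    rw [hindsum (O ∪ S), hindpen (O ∪ S), Finset.sum_union hdisjOS, hsum, hpen] at h
    -- final contradiction
    have hMP : ((β:ℝ)^2 + 1) * ∑ i ∈ F, (1 - xstar i) ≤ (β:ℝ) - 1 := by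
      have haj := haβ j
      linarith
    have hbpos : (0:ℝ) < β := by linarith
    have e1 : ((β:ℝ)^2+1) * 1
        ≤ ((β:ℝ)^2+1) * ((β:ℝ) * ∑ i ∈ F, (1 - xstar i)) :=
      mul_le_mul_of_nonneg_left hP1 (by positivity)
    have e2 : (β:ℝ) * (((β:ℝ)^2+1) * ∑ i ∈ F, (1 - xstar i))
        ≤ (β:ℝ) * ((β:ℝ) - 1) :=
      mul_le_mul_of_nonneg_left hMP hbpos.le
    nlinarith [e1, e2, hβ2R]
end
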